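/- arXiv:2501.03834 — 2 statements merged into one kernel-verified Lean document; each statement's English description precedes it below -/
import Mathlib

section
/- Let s = (i, j) and t = (i', j') be integer points of F_δ such that t is δ-reachable from s. Suppose i* ∈ {i, …, i'} and j* ∈ {j, …, j'} are the unique indices with R(i*) = max_{x ∈ [i, i']} R(x) and B(j*) = min_{y ∈ [j, j']} B(y) (so R(i*) and B(j*) form the bichromatic closest pair of R|[i, i'] and B|[j, j']). Then any maximal horizontal-greedy δ-matching π starting at s either terminates at (i*, j*), or contains a point vertically below t (a point (i', ŷ) with ŷ ≤ j') or horizontally left of t (a point (x̂, j') with x̂ ≤ i'). -/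
open Set

noncomputable section

/-- `R : [1, n] → ℝ` is a one-dimensional polygonal curve with vertices
`R 1, …, R n`: it is affine on each interval `[k, k+1]`. -/
def IsPoly1D (R : ℝ → ℝ) (n : ℕ) : Prop :=
  ∀ k : ℕ, 1 ≤ k → k < n → ∀ x ∈ Icc (k : ℝ) ((k : ℝ) + 1),
    R x = R (k : ℝ) + (x - (k : ℝ)) * (R ((k : ℝ) + 1) - R (k : ℝ))

/-- General position: the vertex values are pairwise distinct. -/
def GeneralPosition (R : ℝ → ℝ) (n : ℕ) : Prop :=
  ∀ k l : ℕ, 1 ≤ k → k ≤ n → 1 ≤ l → l ≤ n → k ≠ l → R (k : ℝ) ≠ R (l : ℝ)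

/-- The `δ`-free space `F_δ = {(x,y) ∈ [1,n] × [1,m] : B y − R x ≤ δ}`. -/
def freeSpace (R B : ℝ → ℝ) (n m : ℕ) (δ : ℝ) : Set (ℝ × ℝ) :=
  {p : ℝ × ℝ | p.1 ∈ Icc (1:ℝ) (n : ℝ) ∧ p.2 ∈ Icc (1:ℝ) (m : ℝ) ∧ B p.2 - R p.1 ≤ δ}

/-- `A i'` is a prefix-minimum of `A[i, ∞)`: `|A i'| ≤ |A x|` for all `x ∈ [i, i']`. -/
def PrefixMin (A : ℝ → ℝ) (i i' : ℤ) : Prop :=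
  i ≤ i' ∧ ∀ x ∈ Icc (i : ℝ) (i' : ℝ), |A (i' : ℝ)| ≤ |A x|

/-- A rectilinear path, given by its sequence of vertices (endpoints and
turning points). -/
structure RectPath where
  N : ℕ
  vert : Fin (N + 1) → ℝ × ℝ

/-- The last vertex (endpoint) of a rectilinear path. -/
def RectPath.last (π : RectPath) : ℝ × ℝ := π.vert (Fin.last π.N)

/-- The image of a rectilinear path: the union of the segments between
consecutive vertices. -/
def RectPath.image (π : RectPath) : Set (ℝ × ℝ) :=
  insert (π.vert 0) (⋃ k : Fin π.N, segment ℝ (π.vert k.castSucc) (π.vert k.succ))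

/-- Each edge of the path is an axis-parallel segment, and the path is
nondecreasing in both coordinates. -/
def RectPath.IsRectilinear (π : RectPath) : Prop :=
  ∀ k : Fin π.N,
    ((π.vert k.castSucc).1 = (π.vert k.succ).1 ∧ (π.vert k.castSucc).2 < (π.vert k.succ).2) ∨
    ((π.vert k.castSucc).2 = (π.vert k.succ).2 ∧ (π.vert k.castSucc).1 < (π.vert k.succ).1)

/-- A prefix-minima `δ`-matching starting at the integer point `s = (i, j)`:
a monotone rectilinear path inside the `δ`-free space starting at `s`, all of
whose vertices are integer points `(i', j')` with `R i'` a prefix-minimum of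
`R[i, n]` and `B j'` a prefix-minimum of `B[j, m]`. -/
def IsPMMatching (R B : ℝ → ℝ) (n m : ℕ) (δ : ℝ) (s : ℤ × ℤ) (π : RectPath) : Prop :=
  π.IsRectilinear ∧
  π.vert 0 = ((s.1 : ℝ), (s.2 : ℝ)) ∧
  π.image ⊆ freeSpace R B n m δ ∧
  ∀ k : Fin (π.N + 1), ∃ i' j' : ℤ,
    π.vert k = ((i' : ℝ), (j' : ℝ)) ∧ PrefixMin R s.1 i' ∧ PrefixMin B s.2 j'

/-- A horizontal-greedy `δ`-matching starting at `s`: a prefix-minima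
`δ`-matching that, from any integer prefix-minima point `(i', j')` on it, either
traverses any available horizontal free-space segment `[i', î] × {j'}` towards a
further prefix-minimum `R î`, or terminates at `(i', j')`. -/
def IsHorizGreedy (R B : ℝ → ℝ) (n m : ℕ) (δ : ℝ) (s : ℤ × ℤ) (π : RectPath) : Prop :=
  IsPMMatching R B n m δ s π ∧
  ∀ i' j' : ℤ, ((i' : ℝ), (j' : ℝ)) ∈ π.image →
    PrefixMin R s.1 i' → PrefixMin B s.2 j' →
    ∀ ihat : ℤ, i' < ihat → PrefixMin R s.1 ihat →
      (Icc (i' : ℝ) (ihat : ℝ) ×ˢ ({(j' : ℝ)} : Set ℝ) ⊆ freeSpace R B n m δ) →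
      (Icc (i' : ℝ) (ihat : ℝ) ×ˢ ({(j' : ℝ)} : Set ℝ) ⊆ π.image ∨
        π.last = ((i' : ℝ), (j' : ℝ)))

/-- `C(π)`: the set of integers `i` such that `π` has a vertical edge contained
in the line `x = i`. -/
def vertLines (π : RectPath) : Set ℤ :=
  {i : ℤ | ∃ k : Fin π.N, (π.vert k.castSucc).1 = (i : ℝ) ∧
    (π.vert k.castSucc).1 = (π.vert k.succ).1}

/-- `R(π)`: the set of integers `j` such that `π` has a horizontal edge contained
in the line `y = j`. -/
def horizLines (π : RectPath) : Set ℤ :=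
  {j : ℤ | ∃ k : Fin π.N, (π.vert k.castSucc).2 = (j : ℝ) ∧
    (π.vert k.castSucc).2 = (π.vert k.succ).2}

/-- Two paths are interior-disjoint if their images share no point that is, for
both paths, distinct from that path's two endpoints. -/
def InteriorDisjoint (π π' : RectPath) : Prop :=
  ∀ p ∈ π.image ∩ π'.image,
    (p = π.vert 0 ∨ p = π.last) ∨ (p = π'.vert 0 ∨ p = π'.last)

/-- A horizontal-greedy `δ`-matching starting at `s` is maximal if it is not a
proper initial portion of another horizontal-greedy `δ`-matching starting at `s`. -/
def IsMaximalHG (R B : ℝ → ℝ) (n m : ℕ) (δ : ℝ) (s : ℤ × ℤ) (π : RectPath) : Prop :=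
  IsHorizGreedy R B n m δ s π ∧
  ∀ π' : RectPath, IsHorizGreedy R B n m δ s π' → π.image ⊆ π'.image →
    π'.image = π.image

/-- `q` is `δ`-reachable from `p`: there is a path inside the `δ`-free space from
`p` to `q` that is nondecreasing in both coordinates. -/
def MonoReachable (R B : ℝ → ℝ) (n m : ℕ) (δ : ℝ) (p q : ℝ × ℝ) : Prop :=
  ∃ γ : ℝ → ℝ × ℝ, ContinuousOn γ (Icc 0 1) ∧ γ 0 = p ∧ γ 1 = q ∧
    (∀ u ∈ Icc (0:ℝ) 1, γ u ∈ freeSpace R B n m δ) ∧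
    MonotoneOn (fun u => (γ u).1) (Icc 0 1) ∧
    MonotoneOn (fun u => (γ u).2) (Icc 0 1)


/-! ### Auxiliary lemmas -/

section Aux

/-- Horizontal segments in the plane. -/
lemma segment_horiz {a b c : ℝ} (hab : a ≤ b) :
    segment ℝ (a, c) (b, c) = Icc a b ×ˢ ({c} : Set ℝ) := by
  ext p
  constructor
  · rintro ⟨u, v, hu, hv, huv, h⟩
    have h1 : u * a + v * b = p.1 := congrArg Prod.fst h
    have h2 : u * c + v * c = p.2 := congrArg Prod.snd h
    have hva : v * a ≤ v * b := mul_le_mul_of_nonneg_left hab hv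
    have hub : u * a ≤ u * b := mul_le_mul_of_nonneg_left hab hu
    have ea : u * a + v * a = a := by rw [← add_mul, huv, one_mul]
    have eb : u * b + v * b = b := by rw [← add_mul, huv, one_mul]
    have ec : u * c + v * c = c := by rw [← add_mul, huv, one_mul]
    exact ⟨⟨by linarith, by linarith⟩, by rw [mem_singleton_iff]; linarith⟩
  · rintro ⟨hp1, hp2⟩
    simp only [mem_singleton_iff] at hp2
    rcases eq_or_lt_of_le hab with h | h
    · have hpa : p.1 = a := le_antisymm (h ▸ hp1.2) hp1.1
      refine ⟨1, 0, zero_le_one, le_rfl, by ring, ?_⟩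
      have : p = (a, c) := Prod.ext_iff.2 ⟨hpa, hp2⟩
      rw [this]
      ext <;> simp
    · have hba : b - a ≠ 0 := by linarith
      refine ⟨(b - p.1) / (b - a), (p.1 - a) / (b - a),
        div_nonneg (by linarith [hp1.2]) (by linarith),
        div_nonneg (by linarith [hp1.1]) (by linarith), by field_simp; ring, ?_⟩
      refine Prod.ext_iff.2 ⟨?_, ?_⟩
      · show (b - p.1) / (b - a) * a + (p.1 - a) / (b - a) * b = p.1
        field_simp
        ring
      · show (b - p.1) / (b - a) * c + (p.1 - a) / (b - a) * c = p.2
        rw [hp2]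
        field_simp
        ring

/-- Vertical segments in the plane. -/
lemma segment_vert {a c d : ℝ} (hcd : c ≤ d) :
    segment ℝ (a, c) (a, d) = ({a} : Set ℝ) ×ˢ Icc c d := by
  ext p
  constructor
  · rintro ⟨u, v, hu, hv, huv, h⟩
    have h1 : u * a + v * a = p.1 := congrArg Prod.fst h
    have h2 : u * c + v * d = p.2 := congrArg Prod.snd h
    have hvc : v * c ≤ v * d := mul_le_mul_of_nonneg_left hcd hv
    have hud : u * c ≤ u * d := mul_le_mul_of_nonneg_left hcd hu
    have ea : u * a + v * a = a := by rw [← add_mul, huv, one_mul]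
    have ec : u * c + v * c = c := by rw [← add_mul, huv, one_mul]
    have ed : u * d + v * d = d := by rw [← add_mul, huv, one_mul]
    exact ⟨by rw [mem_singleton_iff]; linarith, by linarith, by linarith⟩
  · rintro ⟨hp1, hp2⟩
    simp only [mem_singleton_iff] at hp1
    rcases eq_or_lt_of_le hcd with h | h
    · have hpc : p.2 = c := le_antisymm (h ▸ hp2.2) hp2.1
      refine ⟨1, 0, zero_le_one, le_rfl, by ring, ?_⟩
      have : p = (a, c) := Prod.ext_iff.2 ⟨hp1, hpc⟩
      rw [this]
      ext <;> simp
    · have hdc : d - c ≠ 0 := by linarith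
      refine ⟨(d - p.2) / (d - c), (p.2 - c) / (d - c),
        div_nonneg (by linarith [hp2.2]) (by linarith),
        div_nonneg (by linarith [hp2.1]) (by linarith), by field_simp; ring, ?_⟩
      refine Prod.ext_iff.2 ⟨?_, ?_⟩
      · show (d - p.2) / (d - c) * a + (p.2 - c) / (d - c) * a = p.1
        rw [hp1]
        field_simp
        ring
      · show (d - p.2) / (d - c) * c + (p.2 - c) / (d - c) * d = p.2
        field_simp
        ring

lemma isPoly1D_neg {R : ℝ → ℝ} {n : ℕ} (hR : IsPoly1D R n) :
    IsPoly1D (fun x => -R x) n := by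
  intro k hk1 hk2 x hx
  simp only
  rw [hR k hk1 hk2 x hx]; ring

/-- If a polygonal curve is `≤ c` at all integer vertices in `[a, b]`, it is
`≤ c` everywhere on `[a, b]`. -/
lemma poly_le {R : ℝ → ℝ} {n : ℕ} (hR : IsPoly1D R n) {a b : ℤ} {c : ℝ}
    (ha : 1 ≤ a) (hbn : (b : ℝ) ≤ (n : ℝ)) (hab : a ≤ b)
    (hv : ∀ k : ℤ, a ≤ k → k ≤ b → R (k : ℝ) ≤ c) :
    ∀ x ∈ Icc (a : ℝ) (b : ℝ), R x ≤ c := by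
  intro x hx
  by_cases hxb : x = (b : ℝ)
  · rw [hxb]; exact hv b hab le_rfl
  have hxltb : x < (b : ℝ) := lt_of_le_of_ne hx.2 hxb
  set k : ℤ := ⌊x⌋ with hkdef
  have hk1 : (k : ℝ) ≤ x := Int.floor_le x
  have hk2 : x < (k : ℝ) + 1 := Int.lt_floor_add_one x
  have hak : a ≤ k := Int.le_floor.2 hx.1
  have hkb : k + 1 ≤ b := by
    have : k < b := by exact_mod_cast lt_of_le_of_lt hk1 hxltb
    omega
  have hbn' : b ≤ (n : ℤ) := by exact_mod_cast hbn
  have hk0 : 1 ≤ k := le_trans ha hak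
  have hcast : ((k.toNat : ℕ) : ℝ) = (k : ℝ) := by
    exact_mod_cast Int.toNat_of_nonneg (show (0:ℤ) ≤ k by omega)
  have hkn : k.toNat < n := by omega
  have hpoly := hR k.toNat (by omega) hkn x (by rw [hcast]; exact ⟨hk1, hk2.le⟩)
  rw [hcast] at hpoly
  have h1 : R (k : ℝ) ≤ c := hv k hak (by omega)
  have h2 : R ((k : ℝ) + 1) ≤ c := by
    have := hv (k + 1) (by omega) hkb
    push_cast at this
    exact this
  rcases le_total (R ((k : ℝ) + 1)) (R (k : ℝ)) with hc | hc
  · nlinarith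
  · nlinarith

lemma poly_ge {R : ℝ → ℝ} {n : ℕ} (hR : IsPoly1D R n) {a b : ℤ} {c : ℝ}
    (ha : 1 ≤ a) (hbn : (b : ℝ) ≤ (n : ℝ)) (hab : a ≤ b)
    (hv : ∀ k : ℤ, a ≤ k → k ≤ b → c ≤ R (k : ℝ)) :
    ∀ x ∈ Icc (a : ℝ) (b : ℝ), c ≤ R x := by
  intro x hx
  have := poly_le (isPoly1D_neg hR) (c := -c) ha hbn hab
    (fun k h1 h2 => by simpa using neg_le_neg (hv k h1 h2)) x hx
  simpa using this

section Paths

/-- Extend a rectilinear path by one more vertex. -/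
def RectPath.ext (π : RectPath) (w : ℝ × ℝ) : RectPath :=
  ⟨π.N + 1, Fin.snoc π.vert w⟩

lemma RectPath.ext_N (π : RectPath) (w : ℝ × ℝ) : (π.ext w).N = π.N + 1 := rfl

lemma RectPath.ext_vert_castSucc (π : RectPath) (w : ℝ × ℝ) (k : Fin (π.N + 1)) :
    (π.ext w).vert k.castSucc = π.vert k := by
  exact Fin.snoc_castSucc (α := fun _ : Fin (π.N + 1 + 1) => ℝ × ℝ) w π.vert k

lemma RectPath.ext_vert_last (π : RectPath) (w : ℝ × ℝ) :
    (π.ext w).vert (Fin.last (π.N + 1)) = w := by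
  exact Fin.snoc_last (α := fun _ : Fin (π.N + 1 + 1) => ℝ × ℝ) w π.vert

lemma RectPath.ext_last (π : RectPath) (w : ℝ × ℝ) : (π.ext w).last = w :=
  π.ext_vert_last w

lemma RectPath.ext_vert_zero (π : RectPath) (w : ℝ × ℝ) :
    (π.ext w).vert 0 = π.vert 0 := by
  have : (0 : Fin (π.N + 1 + 1)) = (0 : Fin (π.N + 1)).castSucc := rfl
  exact RectPath.ext_vert_castSucc π w 0

lemma RectPath.ext_edge_castSucc (π : RectPath) (w : ℝ × ℝ) (j : Fin π.N) :
    segment ℝ ((π.ext w).vert (j.castSucc : Fin (π.N + 1)).castSucc)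
      ((π.ext w).vert (j.castSucc : Fin (π.N + 1)).succ)
    = segment ℝ (π.vert j.castSucc) (π.vert j.succ) := by
  rw [Fin.succ_castSucc, RectPath.ext_vert_castSucc, RectPath.ext_vert_castSucc]

lemma RectPath.ext_edge_last (π : RectPath) (w : ℝ × ℝ) :
    segment ℝ ((π.ext w).vert (Fin.last π.N : Fin (π.N + 1)).castSucc)
      ((π.ext w).vert (Fin.last π.N : Fin (π.N + 1)).succ)
    = segment ℝ π.last w := by
  rw [Fin.succ_last, RectPath.ext_vert_castSucc, RectPath.ext_vert_last]
  rfl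

lemma RectPath.ext_image (π : RectPath) (w : ℝ × ℝ) :
    (π.ext w).image = π.image ∪ segment ℝ π.last w := by
  unfold RectPath.image
  rw [RectPath.ext_vert_zero]
  have hU : (⋃ k : Fin (π.N + 1), segment ℝ ((π.ext w).vert k.castSucc) ((π.ext w).vert k.succ))
      = (⋃ j : Fin π.N, segment ℝ (π.vert j.castSucc) (π.vert j.succ)) ∪ segment ℝ π.last w := by
    ext x
    simp only [mem_iUnion, mem_union]
    constructor
    · rintro ⟨k, hk⟩
      rcases Fin.eq_castSucc_or_eq_last k with ⟨j, rfl⟩ | rfl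
      · rw [RectPath.ext_edge_castSucc] at hk
        exact Or.inl ⟨j, hk⟩
      · rw [RectPath.ext_edge_last] at hk
        exact Or.inr hk
    · rintro (⟨j, hj⟩ | hx)
      · exact ⟨j.castSucc, by rw [RectPath.ext_edge_castSucc]; exact hj⟩
      · exact ⟨Fin.last π.N, by rw [RectPath.ext_edge_last]; exact hx⟩
  rw [show (⋃ k : Fin ((π.ext w).N), segment ℝ ((π.ext w).vert k.castSucc) ((π.ext w).vert k.succ))
      = (⋃ j : Fin π.N, segment ℝ (π.vert j.castSucc) (π.vert j.succ)) ∪ segment ℝ π.last w from hU,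
    ← insert_union]

lemma RectPath.vert_mono {π : RectPath} (h : π.IsRectilinear) {k l : Fin (π.N + 1)}
    (hkl : k ≤ l) : (π.vert k).1 ≤ (π.vert l).1 ∧ (π.vert k).2 ≤ (π.vert l).2 := by
  have step : ∀ j : Fin π.N,
      (π.vert j.castSucc).1 ≤ (π.vert j.succ).1 ∧ (π.vert j.castSucc).2 ≤ (π.vert j.succ).2 := by
    intro j
    rcases h j with ⟨h1, h2⟩ | ⟨h1, h2⟩
    · exact ⟨le_of_eq h1, h2.le⟩
    · exact ⟨h2.le, le_of_eq h1⟩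
  have m1 : Monotone (fun i : Fin (π.N + 1) => (π.vert i).1) :=
    Fin.monotone_iff_le_succ.2 fun j => (step j).1
  have m2 : Monotone (fun i : Fin (π.N + 1) => (π.vert i).2) :=
    Fin.monotone_iff_le_succ.2 fun j => (step j).2
  exact ⟨m1 hkl, m2 hkl⟩

lemma RectPath.image_bounds {π : RectPath} (h : π.IsRectilinear) {p : ℝ × ℝ}
    (hp : p ∈ π.image) :
    (π.vert 0).1 ≤ p.1 ∧ (π.vert 0).2 ≤ p.2 ∧ p.1 ≤ π.last.1 ∧ p.2 ≤ π.last.2 := by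
  have hmono := fun (k l : Fin (π.N + 1)) (hkl : k ≤ l) => RectPath.vert_mono h hkl
  rcases hp with rfl | hp
  · have := hmono 0 (Fin.last π.N) (Fin.zero_le _)
    exact ⟨le_rfl, le_rfl, this.1, this.2⟩
  · rw [mem_iUnion] at hp
    obtain ⟨k, hk⟩ := hp
    obtain ⟨u, v, hu, hv, huv, heq⟩ := hk
    set A := π.vert k.castSucc with hA
    set B := π.vert k.succ with hB
    have hAB : A.1 ≤ B.1 ∧ A.2 ≤ B.2 := hmono k.castSucc k.succ (Fin.castSucc_le_succ k)
    have h1 : u * A.1 + v * B.1 = p.1 := congrArg Prod.fst heq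
    have h2 : u * A.2 + v * B.2 = p.2 := congrArg Prod.snd heq
    have h0A : (π.vert 0).1 ≤ A.1 ∧ (π.vert 0).2 ≤ A.2 := hmono 0 k.castSucc (Fin.zero_le _)
    have hBlast : B.1 ≤ π.last.1 ∧ B.2 ≤ π.last.2 := hmono k.succ (Fin.last π.N) (Fin.le_last _)
    have eA1 : u * A.1 + v * A.1 = A.1 := by rw [← add_mul, huv, one_mul]
    have eB1 : u * B.1 + v * B.1 = B.1 := by rw [← add_mul, huv, one_mul]
    have eA2 : u * A.2 + v * A.2 = A.2 := by rw [← add_mul, huv, one_mul]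
    have eB2 : u * B.2 + v * B.2 = B.2 := by rw [← add_mul, huv, one_mul]
    have l1 : v * A.1 ≤ v * B.1 := mul_le_mul_of_nonneg_left hAB.1 hv
    have l2 : u * A.1 ≤ u * B.1 := mul_le_mul_of_nonneg_left hAB.1 hu
    have l3 : v * A.2 ≤ v * B.2 := mul_le_mul_of_nonneg_left hAB.2 hv
    have l4 : u * A.2 ≤ u * B.2 := mul_le_mul_of_nonneg_left hAB.2 hu
    exact ⟨by linarith [h0A.1], by linarith [h0A.2],
      by linarith [hBlast.1], by linarith [hBlast.2]⟩

lemma RectPath.vert_mem_image (π : RectPath) (k : Fin (π.N + 1)) :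
    π.vert k ∈ π.image := by
  rcases Fin.eq_castSucc_or_eq_last k with ⟨j, rfl⟩ | rfl
  · exact Or.inr (mem_iUnion.2 ⟨j, left_mem_segment ℝ _ _⟩)
  · by_cases h : π.N = 0
    · have : Fin.last π.N = 0 := by ext; simp [h]
      rw [this]; exact Or.inl rfl
    · obtain ⟨M, hM⟩ := Nat.exists_eq_succ_of_ne_zero h
      have hj : (⟨M, by omega⟩ : Fin π.N).succ = Fin.last π.N := by
        ext; simp [hM]
      refine Or.inr (mem_iUnion.2 ⟨⟨M, by omega⟩, ?_⟩)
      rw [← hj]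
      exact right_mem_segment ℝ _ _

lemma RectPath.last_mem_image (π : RectPath) : π.last ∈ π.image :=
  π.vert_mem_image _

lemma RectPath.zero_mem_image (π : RectPath) : π.vert 0 ∈ π.image := Or.inl rfl

end Paths

section More

lemma segment_horiz' {A C : ℝ × ℝ} (h2 : A.2 = C.2) (h1 : A.1 ≤ C.1) :
    segment ℝ A C = Icc A.1 C.1 ×ˢ ({A.2} : Set ℝ) := by
  calc segment ℝ A C = segment ℝ (A.1, A.2) (C.1, C.2) := rfl
    _ = Icc A.1 C.1 ×ˢ ({A.2} : Set ℝ) := by rw [h2]; exact segment_horiz h1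

lemma segment_vert' {A C : ℝ × ℝ} (h1 : A.1 = C.1) (h2 : A.2 ≤ C.2) :
    segment ℝ A C = ({A.1} : Set ℝ) ×ˢ Icc A.2 C.2 := by
  calc segment ℝ A C = segment ℝ (A.1, A.2) (C.1, C.2) := rfl
    _ = ({A.1} : Set ℝ) ×ˢ Icc A.2 C.2 := by rw [h1]; exact segment_vert h2

lemma cross_x (π : RectPath) (hrect : π.IsRectilinear) (c : ℝ)
    (h0 : (π.vert 0).1 ≤ c) (hl : c ≤ π.last.1) :
    ∃ p ∈ π.image, p.1 = c ∧ ∀ k : Fin (π.N + 1), c ≤ (π.vert k).1 → p.2 ≤ (π.vert k).2 := by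
  classical
  have hex : ∃ j : ℕ, ∃ h : j < π.N + 1, c ≤ (π.vert ⟨j, h⟩).1 :=
    ⟨π.N, Nat.lt_succ_self _, hl⟩
  set j0 := Nat.find hex with hj0def
  obtain ⟨hj0lt, hj0⟩ := Nat.find_spec hex
  set k0 : Fin (π.N + 1) := ⟨j0, hj0lt⟩ with hk0def
  have hge : ∀ k : Fin (π.N + 1), c ≤ (π.vert k).1 → k0 ≤ k := by
    intro k hk
    by_contra hlt
    push_neg at hlt
    have hklt : (k : ℕ) < j0 := hlt
    exact Nat.find_min hex hklt ⟨k.isLt, by convert hk using 3⟩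
  rcases Nat.eq_zero_or_pos j0 with hz | hpos
  · have hk00 : k0 = 0 := by ext; exact hz
    have heq : (π.vert 0).1 = c := le_antisymm h0 (by rw [← hk00]; exact hj0)
    refine ⟨π.vert 0, π.zero_mem_image, heq, fun k _ => ?_⟩
    exact (RectPath.vert_mono hrect (Fin.zero_le k)).2
  · set jp := j0 - 1 with hjpdef
    have hjpe : jp + 1 = j0 := by omega
    have hjplt : jp < π.N := by omega
    set e : Fin π.N := ⟨jp, hjplt⟩ with hedef
    have hecs : e.castSucc = ⟨jp, by omega⟩ := rfl
    have hesucc : e.succ = k0 := by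
      apply Fin.ext
      show jp + 1 = j0
      omega
    have hkp : ¬ c ≤ (π.vert e.castSucc).1 := by
      intro hc
      exact Nat.find_min hex (show jp < j0 by omega) ⟨by omega, hc⟩
    push_neg at hkp
    rcases hrect e with ⟨h1, h2⟩ | ⟨h1, h2⟩
    · exfalso
      rw [hesucc] at h1
      rw [h1] at hkp
      exact absurd hj0 (not_le.2 hkp)
    · refine ⟨(c, (π.vert e.castSucc).2), ?_, rfl, ?_⟩
      · refine Or.inr (mem_iUnion.2 ⟨e, ?_⟩)
        rw [segment_horiz' h1 h2.le]
        exact ⟨⟨hkp.le, by rw [hesucc]; exact hj0⟩, rfl⟩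
      · intro k hk
        have hk0k := hge k hk
        have : (π.vert e.castSucc).2 = (π.vert k0).2 := by rw [← hesucc, h1]
        rw [show ((c, (π.vert e.castSucc).2) : ℝ × ℝ).2 = (π.vert e.castSucc).2 from rfl, this]
        exact (RectPath.vert_mono hrect hk0k).2

lemma cross_y (π : RectPath) (hrect : π.IsRectilinear) (c : ℝ)
    (h0 : (π.vert 0).2 ≤ c) (hl : c ≤ π.last.2) :
    ∃ p ∈ π.image, p.2 = c ∧ ∀ k : Fin (π.N + 1), c ≤ (π.vert k).2 → p.1 ≤ (π.vert k).1 := by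
  classical
  have hex : ∃ j : ℕ, ∃ h : j < π.N + 1, c ≤ (π.vert ⟨j, h⟩).2 :=
    ⟨π.N, Nat.lt_succ_self _, hl⟩
  set j0 := Nat.find hex with hj0def
  obtain ⟨hj0lt, hj0⟩ := Nat.find_spec hex
  set k0 : Fin (π.N + 1) := ⟨j0, hj0lt⟩ with hk0def
  have hge : ∀ k : Fin (π.N + 1), c ≤ (π.vert k).2 → k0 ≤ k := by
    intro k hk
    by_contra hlt
    push_neg at hlt
    have hklt : (k : ℕ) < j0 := hlt
    exact Nat.find_min hex hklt ⟨k.isLt, by convert hk using 3⟩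
  rcases Nat.eq_zero_or_pos j0 with hz | hpos
  · have hk00 : k0 = 0 := by ext; exact hz
    have heq : (π.vert 0).2 = c := le_antisymm h0 (by rw [← hk00]; exact hj0)
    refine ⟨π.vert 0, π.zero_mem_image, heq, fun k _ => ?_⟩
    exact (RectPath.vert_mono hrect (Fin.zero_le k)).1
  · set jp := j0 - 1 with hjpdef
    have hjplt : jp < π.N := by omega
    set e : Fin π.N := ⟨jp, hjplt⟩ with hedef
    have hesucc : e.succ = k0 := by
      apply Fin.ext
      show jp + 1 = j0
      omega
    have hkp : ¬ c ≤ (π.vert e.castSucc).2 := by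
      intro hc
      exact Nat.find_min hex (show jp < j0 by omega) ⟨by omega, hc⟩
    push_neg at hkp
    rcases hrect e with ⟨h1, h2⟩ | ⟨h1, h2⟩
    · refine ⟨((π.vert e.castSucc).1, c), ?_, rfl, ?_⟩
      · refine Or.inr (mem_iUnion.2 ⟨e, ?_⟩)
        rw [segment_vert' h1 h2.le]
        exact ⟨rfl, ⟨hkp.le, by rw [hesucc]; exact hj0⟩⟩
      · intro k hk
        have hk0k := hge k hk
        have : (π.vert e.castSucc).1 = (π.vert k0).1 := by rw [← hesucc, h1]
        rw [show (((π.vert e.castSucc).1, c) : ℝ × ℝ).1 = (π.vert e.castSucc).1 from rfl, this]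
        exact (RectPath.vert_mono hrect hk0k).1
    · exfalso
      rw [hesucc] at h1
      rw [h1] at hkp
      exact absurd hj0 (not_le.2 hkp)

lemma gp_int {R : ℝ → ℝ} {n : ℕ} (h : GeneralPosition R n) {k l : ℤ}
    (hk1 : 1 ≤ k) (hkn : (k : ℝ) ≤ (n : ℝ)) (hl1 : 1 ≤ l) (hln : (l : ℝ) ≤ (n : ℝ))
    (hne : k ≠ l) : R (k : ℝ) ≠ R (l : ℝ) := by
  have hkn' : k ≤ (n : ℤ) := by exact_mod_cast hkn
  have hln' : l ≤ (n : ℤ) := by exact_mod_cast hln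
  have ck : ((k.toNat : ℕ) : ℝ) = (k : ℝ) := by
    exact_mod_cast Int.toNat_of_nonneg (show (0:ℤ) ≤ k by omega)
  have cl : ((l.toNat : ℕ) : ℝ) = (l : ℝ) := by
    exact_mod_cast Int.toNat_of_nonneg (show (0:ℤ) ≤ l by omega)
  have := h k.toNat l.toNat (by omega) (by omega) (by omega) (by omega) (by omega)
  rwa [ck, cl] at this

lemma pm_of_R {R : ℝ → ℝ} {n : ℕ} (hsep : ∀ x ∈ Icc (1:ℝ) (n:ℝ), R x ≤ 0) {i a : ℤ}
    (h1 : 1 ≤ i) (han : (a : ℝ) ≤ (n : ℝ)) (hia : i ≤ a)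
    (h : ∀ x ∈ Icc (i : ℝ) (a : ℝ), R x ≤ R (a : ℝ)) : PrefixMin R i a := by
  refine ⟨hia, fun x hx => ?_⟩
  have hi1 : (1:ℝ) ≤ (i:ℝ) := by exact_mod_cast h1
  have hx1 : (1:ℝ) ≤ x := le_trans hi1 hx.1
  have hxn : x ≤ (n:ℝ) := le_trans hx.2 han
  have ha1 : (1:ℝ) ≤ (a:ℝ) := le_trans hi1 (by exact_mod_cast hia)
  rw [abs_of_nonpos (hsep _ ⟨ha1, han⟩), abs_of_nonpos (hsep x ⟨hx1, hxn⟩)]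
  linarith [h x hx]

lemma pm_R_le {R : ℝ → ℝ} {n : ℕ} (hsep : ∀ x ∈ Icc (1:ℝ) (n:ℝ), R x ≤ 0) {i a : ℤ}
    (h1 : 1 ≤ i) (han : (a : ℝ) ≤ (n : ℝ)) (pm : PrefixMin R i a) :
    ∀ x ∈ Icc (i : ℝ) (a : ℝ), R x ≤ R (a : ℝ) := by
  intro x hx
  have hi1 : (1:ℝ) ≤ (i:ℝ) := by exact_mod_cast h1
  have hx1 : (1:ℝ) ≤ x := le_trans hi1 hx.1
  have hxn : x ≤ (n:ℝ) := le_trans hx.2 han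
  have ha1 : (1:ℝ) ≤ (a:ℝ) := le_trans hi1 (by exact_mod_cast pm.1)
  have := pm.2 x hx
  rw [abs_of_nonpos (hsep _ ⟨ha1, han⟩), abs_of_nonpos (hsep x ⟨hx1, hxn⟩)] at this
  linarith

lemma pm_of_B {B : ℝ → ℝ} {m : ℕ} (hsep : ∀ y ∈ Icc (1:ℝ) (m:ℝ), 0 ≤ B y) {i a : ℤ}
    (h1 : 1 ≤ i) (ham : (a : ℝ) ≤ (m : ℝ)) (hia : i ≤ a)
    (h : ∀ y ∈ Icc (i : ℝ) (a : ℝ), B (a : ℝ) ≤ B y) : PrefixMin B i a := by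
  refine ⟨hia, fun y hy => ?_⟩
  have hi1 : (1:ℝ) ≤ (i:ℝ) := by exact_mod_cast h1
  have hy1 : (1:ℝ) ≤ y := le_trans hi1 hy.1
  have hym : y ≤ (m:ℝ) := le_trans hy.2 ham
  have ha1 : (1:ℝ) ≤ (a:ℝ) := le_trans hi1 (by exact_mod_cast hia)
  rw [abs_of_nonneg (hsep _ ⟨ha1, ham⟩), abs_of_nonneg (hsep y ⟨hy1, hym⟩)]
  exact h y hy

lemma pm_B_le {B : ℝ → ℝ} {m : ℕ} (hsep : ∀ y ∈ Icc (1:ℝ) (m:ℝ), 0 ≤ B y) {i a : ℤ}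
    (h1 : 1 ≤ i) (ham : (a : ℝ) ≤ (m : ℝ)) (pm : PrefixMin B i a) :
    ∀ y ∈ Icc (i : ℝ) (a : ℝ), B (a : ℝ) ≤ B y := by
  intro y hy
  have hi1 : (1:ℝ) ≤ (i:ℝ) := by exact_mod_cast h1
  have hy1 : (1:ℝ) ≤ y := le_trans hi1 hy.1
  have hym : y ≤ (m:ℝ) := le_trans hy.2 ham
  have ha1 : (1:ℝ) ≤ (a:ℝ) := le_trans hi1 (by exact_mod_cast pm.1)
  have := pm.2 y hy
  rwa [abs_of_nonneg (hsep _ ⟨ha1, ham⟩), abs_of_nonneg (hsep y ⟨hy1, hym⟩)] at this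

end More

lemma RectPath.ext_isRectilinear {π : RectPath} (h : π.IsRectilinear) {w : ℝ × ℝ}
    (hw : (π.last.1 = w.1 ∧ π.last.2 < w.2) ∨ (π.last.2 = w.2 ∧ π.last.1 < w.1)) :
    (π.ext w).IsRectilinear := by
  have main : ∀ k : Fin (π.N + 1),
      (((π.ext w).vert k.castSucc).1 = ((π.ext w).vert k.succ).1 ∧
        ((π.ext w).vert k.castSucc).2 < ((π.ext w).vert k.succ).2) ∨
      (((π.ext w).vert k.castSucc).2 = ((π.ext w).vert k.succ).2 ∧
        ((π.ext w).vert k.castSucc).1 < ((π.ext w).vert k.succ).1) := by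
    intro k
    rcases Fin.eq_castSucc_or_eq_last k with ⟨j, rfl⟩ | rfl
    · rw [Fin.succ_castSucc, RectPath.ext_vert_castSucc, RectPath.ext_vert_castSucc]
      exact h j
    · rw [Fin.succ_last, RectPath.ext_vert_castSucc, RectPath.ext_vert_last]
      exact hw
  exact main

lemma RectPath.ext_vertex_prop {π : RectPath} {w : ℝ × ℝ} (P : ℝ × ℝ → Prop)
    (hπ : ∀ k : Fin (π.N + 1), P (π.vert k)) (hw : P w) :
    ∀ k : Fin ((π.ext w).N + 1), P ((π.ext w).vert k) := by
  have main : ∀ k : Fin (π.N + 1 + 1), P ((π.ext w).vert k) := by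
    intro k
    rcases Fin.eq_castSucc_or_eq_last k with ⟨j, rfl⟩ | rfl
    · rw [RectPath.ext_vert_castSucc]; exact hπ j
    · rw [RectPath.ext_vert_last]; exact hw
  exact main


end Aux

/-- Let `t` be `δ`-reachable from `s`, and let `R i*`, `B j*` be
the unique maximum of `R` on `[s₁, t₁]` and minimum of `B` on `[s₂, t₂]` (the
bichromatic closest pair). Then any maximal horizontal-greedy `δ`-matching `π`
starting at `s` either terminates at `(i*, j*)`, or contains a point vertically
below `t` or horizontally left of `t`. -/
theorem horizontal_greedy_paths
    (n m : ℕ) (hn : 1 ≤ n) (hm : 1 ≤ m)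
    (R B : ℝ → ℝ) (hR : IsPoly1D R n) (hB : IsPoly1D B m)
    (hsepR : ∀ x ∈ Icc (1:ℝ) (n : ℝ), R x ≤ 0)
    (hsepB : ∀ y ∈ Icc (1:ℝ) (m : ℝ), 0 ≤ B y)
    (hgpR : GeneralPosition R n) (hgpB : GeneralPosition B m)
    (δ : ℝ) (hδ : 0 ≤ δ)
    (s t : ℤ × ℤ)
    (hs : ((s.1 : ℝ), (s.2 : ℝ)) ∈ freeSpace R B n m δ)
    (ht : ((t.1 : ℝ), (t.2 : ℝ)) ∈ freeSpace R B n m δ)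
    (hreach : MonoReachable R B n m δ ((s.1 : ℝ), (s.2 : ℝ)) ((t.1 : ℝ), (t.2 : ℝ)))
    (istar jstar : ℤ)
    (histar : istar ∈ Set.Icc s.1 t.1) (hjstar : jstar ∈ Set.Icc s.2 t.2)
    (hmax : ∀ x ∈ Icc (s.1 : ℝ) (t.1 : ℝ), R x ≤ R (istar : ℝ))
    (hmaxu : ∀ k : ℤ, k ∈ Set.Icc s.1 t.1 →
      (∀ x ∈ Icc (s.1 : ℝ) (t.1 : ℝ), R x ≤ R (k : ℝ)) → k = istar)
    (hmin : ∀ y ∈ Icc (s.2 : ℝ) (t.2 : ℝ), B (jstar : ℝ) ≤ B y)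
    (hminu : ∀ l : ℤ, l ∈ Set.Icc s.2 t.2 →
      (∀ y ∈ Icc (s.2 : ℝ) (t.2 : ℝ), B (l : ℝ) ≤ B y) → l = jstar)
    (π : RectPath) (hπ : IsMaximalHG R B n m δ s π) :
    π.last = ((istar : ℝ), (jstar : ℝ)) ∨
    (∃ yhat : ℝ, yhat ≤ (t.2 : ℝ) ∧ ((t.1 : ℝ), yhat) ∈ π.image) ∨
    (∃ xhat : ℝ, xhat ≤ (t.1 : ℝ) ∧ (xhat, (t.2 : ℝ)) ∈ π.image) := by
  
  classical
  obtain ⟨γ, hγc, hγ0, hγ1, hγF, hγx, hγy⟩ := hreach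
  have h0mem : (0:ℝ) ∈ Icc (0:ℝ) 1 := ⟨le_rfl, zero_le_one⟩
  have h1mem : (1:ℝ) ∈ Icc (0:ℝ) 1 := ⟨zero_le_one, le_rfl⟩
  have hγ0x : (γ 0).1 = (s.1 : ℝ) := by rw [hγ0]
  have hγ0y : (γ 0).2 = (s.2 : ℝ) := by rw [hγ0]
  have hγ1x : (γ 1).1 = (t.1 : ℝ) := by rw [hγ1]
  have hγ1y : (γ 1).2 = (t.2 : ℝ) := by rw [hγ1]
  have hst1 : (s.1 : ℝ) ≤ (t.1 : ℝ) := by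
    have := hγx h0mem h1mem zero_le_one
    simpa only [hγ0x, hγ1x] using this
  have hst2 : (s.2 : ℝ) ≤ (t.2 : ℝ) := by
    have := hγy h0mem h1mem zero_le_one
    simpa only [hγ0y, hγ1y] using this
  have hs1r : (1:ℝ) ≤ (s.1 : ℝ) := hs.1.1
  have hs2r : (1:ℝ) ≤ (s.2 : ℝ) := hs.2.1.1
  have hs11 : (1:ℤ) ≤ s.1 := by exact_mod_cast hs1r
  have hs21 : (1:ℤ) ≤ s.2 := by exact_mod_cast hs2r
  have ht1n : (t.1 : ℝ) ≤ (n : ℝ) := ht.1.2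
  have ht2m : (t.2 : ℝ) ≤ (m : ℝ) := ht.2.1.2
  have histar1 : s.1 ≤ istar := histar.1
  have histar2 : istar ≤ t.1 := histar.2
  have hjstar1 : s.2 ≤ jstar := hjstar.1
  have hjstar2 : jstar ≤ t.2 := hjstar.2
  have histar1' : (s.1:ℝ) ≤ (istar:ℝ) := by exact_mod_cast histar1
  have histar2' : (istar:ℝ) ≤ (t.1:ℝ) := by exact_mod_cast histar2
  have hjstar1' : (s.2:ℝ) ≤ (jstar:ℝ) := by exact_mod_cast hjstar1
  have hjstar2' : (jstar:ℝ) ≤ (t.2:ℝ) := by exact_mod_cast hjstar2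
  have hxlo : ∀ u ∈ Icc (0:ℝ) 1, (s.1 : ℝ) ≤ (γ u).1 := fun u hu => by
    have := hγx h0mem hu hu.1; simpa only [hγ0x] using this
  have hxhi : ∀ u ∈ Icc (0:ℝ) 1, (γ u).1 ≤ (t.1 : ℝ) := fun u hu => by
    have := hγx hu h1mem hu.2; simpa only [hγ1x] using this
  have hylo : ∀ u ∈ Icc (0:ℝ) 1, (s.2 : ℝ) ≤ (γ u).2 := fun u hu => by
    have := hγy h0mem hu hu.1; simpa only [hγ0y] using this
  have hyhi : ∀ u ∈ Icc (0:ℝ) 1, (γ u).2 ≤ (t.2 : ℝ) := fun u hu => by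
    have := hγy hu h1mem hu.2; simpa only [hγ1y] using this
  have hIVTx : ∀ c ∈ Icc (s.1:ℝ) (t.1:ℝ), ∃ u ∈ Icc (0:ℝ) 1, (γ u).1 = c := by
    intro c hc
    have hcont : ContinuousOn (fun u => (γ u).1) (Icc 0 1) := hγc.fst
    have hsub := intermediate_value_Icc (zero_le_one (α := ℝ)) hcont
    simp only [hγ0x, hγ1x] at hsub
    obtain ⟨u, hu, hcu⟩ := hsub hc
    exact ⟨u, hu, hcu⟩
  have hIVTy : ∀ c ∈ Icc (s.2:ℝ) (t.2:ℝ), ∃ u ∈ Icc (0:ℝ) 1, (γ u).2 = c := by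
    intro c hc
    have hcont : ContinuousOn (fun u => (γ u).2) (Icc 0 1) := hγc.snd
    have hsub := intermediate_value_Icc (zero_le_one (α := ℝ)) hcont
    simp only [hγ0y, hγ1y] at hsub
    obtain ⟨u, hu, hcu⟩ := hsub hc
    exact ⟨u, hu, hcu⟩
  have hrow : ∀ x ∈ Icc (s.1:ℝ) (t.1:ℝ), B (jstar:ℝ) ≤ δ + R x := by
    intro x hx
    obtain ⟨u, hu, hxu⟩ := hIVTx x hx
    have hfree := (hγF u hu).2.2
    rw [hxu] at hfree
    have h2 := hmin (γ u).2 ⟨hylo u hu, hyhi u hu⟩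
    linarith
  have hcol : ∀ y ∈ Icc (s.2:ℝ) (t.2:ℝ), B y ≤ δ + R (istar:ℝ) := by
    intro y hy
    obtain ⟨u, hu, hyu⟩ := hIVTy y hy
    have hfree := (hγF u hu).2.2
    rw [hyu] at hfree
    have h2 := hmax (γ u).1 ⟨hxlo u hu, hxhi u hu⟩
    linarith
  obtain ⟨⟨⟨hrect, hvert0, himF, hvertex⟩, hgreedy⟩, hmaximal⟩ := hπ
  have hv01 : (π.vert 0).1 = (s.1 : ℝ) := by rw [hvert0]
  have hv02 : (π.vert 0).2 = (s.2 : ℝ) := by rw [hvert0]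
  by_cases hcase1 : (t.1:ℝ) ≤ π.last.1
  · right
    obtain ⟨p, hp, hp1, hpbd⟩ := cross_x π hrect (t.1:ℝ) (by rw [hv01]; exact hst1) hcase1
    by_cases hps : p.2 ≤ (t.2:ℝ)
    · left
      refine ⟨p.2, hps, ?_⟩
      rw [← hp1]
      exact hp
    · push_neg at hps
      have hvex : ∃ k : Fin (π.N+1), (π.vert k).1 ≤ (t.1:ℝ) ∧ (t.2:ℝ) ≤ (π.vert k).2 := by
        rcases hp with heq | hp'
        · exfalso
          have : p.2 = (s.2:ℝ) := by rw [heq, hv02]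
          rw [this] at hps
          linarith
        · rw [mem_iUnion] at hp'
          obtain ⟨e, he⟩ := hp'
          rcases hrect e with ⟨h1, h2⟩ | ⟨h1, h2⟩
          · rw [segment_vert' h1 h2.le] at he
            obtain ⟨he1, he2⟩ := he
            rw [mem_singleton_iff] at he1
            refine ⟨e.succ, ?_, ?_⟩
            · rw [← h1, ← he1, hp1]
            · calc (t.2:ℝ) ≤ p.2 := hps.le
                _ ≤ (π.vert e.succ).2 := he2.2
          · rw [segment_horiz' h1 h2.le] at he
            obtain ⟨he1, he2⟩ := he
            rw [mem_singleton_iff] at he2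
            refine ⟨e.castSucc, ?_, ?_⟩
            · calc (π.vert e.castSucc).1 ≤ p.1 := he1.1
                _ = (t.1:ℝ) := hp1
            · calc (t.2:ℝ) ≤ p.2 := hps.le
                _ = (π.vert e.castSucc).2 := he2
      obtain ⟨k0, hk01, hk02⟩ := hvex
      have hlast2 : (t.2:ℝ) ≤ π.last.2 :=
        le_trans hk02 (RectPath.vert_mono hrect (Fin.le_last k0)).2
      obtain ⟨q, hq, hq2, hqbd⟩ := cross_y π hrect (t.2:ℝ) (by rw [hv02]; exact hst2) hlast2
      right
      refine ⟨q.1, le_trans (hqbd k0 hk02) hk01, ?_⟩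
      rw [← hq2]
      exact hq
  push_neg at hcase1
  by_cases hcase2 : (t.2:ℝ) ≤ π.last.2
  · right; right
    obtain ⟨q, hq, hq2, hqbd⟩ := cross_y π hrect (t.2:ℝ) (by rw [hv02]; exact hst2) hcase2
    have hq1 : q.1 ≤ π.last.1 := hqbd (Fin.last π.N) hcase2
    refine ⟨q.1, le_trans hq1 hcase1.le, ?_⟩
    rw [← hq2]
    exact hq
  push_neg at hcase2
    -- Interior case: the endpoint of π lies strictly inside the box
  obtain ⟨i', j', hlast_eq, hpmR', hpmB'⟩ := hvertex (Fin.last π.N)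
  have hlast : π.last = ((i':ℝ), (j':ℝ)) := hlast_eq
  have hi'lt : (i':ℝ) < (t.1:ℝ) := by rw [hlast] at hcase1; exact hcase1
  have hj'lt : (j':ℝ) < (t.2:ℝ) := by rw [hlast] at hcase2; exact hcase2
  have hsi' : s.1 ≤ i' := hpmR'.1
  have hsj' : s.2 ≤ j' := hpmB'.1
  have hsi'r : (s.1:ℝ) ≤ (i':ℝ) := by exact_mod_cast hsi'
  have hsj'r : (s.2:ℝ) ≤ (j':ℝ) := by exact_mod_cast hsj'
  have hi'1 : (1:ℤ) ≤ i' := le_trans hs11 hsi'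
  have hj'1 : (1:ℤ) ≤ j' := le_trans hs21 hsj'
  have hi'1r : (1:ℝ) ≤ (i':ℝ) := by exact_mod_cast hi'1
  have hj'1r : (1:ℝ) ≤ (j':ℝ) := by exact_mod_cast hj'1
  have hi'n : (i':ℝ) ≤ (n:ℝ) := le_trans hi'lt.le ht1n
  have hj'm : (j':ℝ) ≤ (m:ℝ) := le_trans hj'lt.le ht2m
  have histarn : (istar:ℝ) ≤ (n:ℝ) := le_trans histar2' ht1n
  have hjstarm : (jstar:ℝ) ≤ (m:ℝ) := le_trans hjstar2' ht2m
  have histar1Z1 : (1:ℤ) ≤ istar := le_trans hs11 histar1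
  have hjstar1Z1 : (1:ℤ) ≤ jstar := le_trans hs21 hjstar1
  have hfree_last : ((i':ℝ), (j':ℝ)) ∈ freeSpace R B n m δ := by
    rw [← hlast]; exact himF π.last_mem_image
  have hfl : B (j':ℝ) - R (i':ℝ) ≤ δ := hfree_last.2.2
  have hi'star : i' ≤ istar := by
    by_contra hlt
    push_neg at hlt
    have h1 : R (i':ℝ) ≤ R (istar:ℝ) := hmax (i':ℝ) ⟨hsi'r, hi'lt.le⟩
    have h2 : R (istar:ℝ) ≤ R (i':ℝ) :=
      pm_R_le hsepR hs11 hi'n hpmR' (istar:ℝ) ⟨histar1', by exact_mod_cast hlt.le⟩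
    exact gp_int hgpR histar1Z1 histarn hi'1 hi'n (by omega) (le_antisymm h2 h1)
  have hj'star : j' ≤ jstar := by
    by_contra hlt
    push_neg at hlt
    have h1 : B (jstar:ℝ) ≤ B (j':ℝ) := hmin (j':ℝ) ⟨hsj'r, hj'lt.le⟩
    have h2 : B (j':ℝ) ≤ B (jstar:ℝ) :=
      pm_B_le hsepB hs21 hj'm hpmB' (jstar:ℝ) ⟨hjstar1', by exact_mod_cast hlt.le⟩
    exact gp_int hgpB hj'1 hj'm hjstar1Z1 hjstarm (by omega) (le_antisymm h2 h1)
  by_cases hend : i' = istar ∧ j' = jstar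
  · left
    rw [hlast, hend.1, hend.2]
  exfalso
  by_cases hA : ∃ ihat : ℤ, i' < ihat ∧ PrefixMin R s.1 ihat ∧
      (Icc (i':ℝ) (ihat:ℝ) ×ˢ ({(j':ℝ)} : Set ℝ) ⊆ freeSpace R B n m δ)
  · -- Horizontal extension contradicts maximality
    have hbdd : ∃ b : ℤ, ∀ z : ℤ, (i' < z ∧ PrefixMin R s.1 z ∧
        (Icc (i':ℝ) (z:ℝ) ×ˢ ({(j':ℝ)} : Set ℝ) ⊆ freeSpace R B n m δ)) → z ≤ b := by
      refine ⟨n, fun z hz => ?_⟩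
      have hiz : (i':ℝ) ≤ (z:ℝ) := by exact_mod_cast hz.1.le
      have hzt : ((z:ℝ), (j':ℝ)) ∈ freeSpace R B n m δ :=
        hz.2.2 ⟨⟨hiz, le_rfl⟩, rfl⟩
      have hzn : (z:ℝ) ≤ (n:ℝ) := hzt.1.2
      exact_mod_cast hzn
    obtain ⟨M, hMP, hMmax⟩ := Int.exists_greatest_of_bdd hbdd hA
    obtain ⟨hM1, hM2, hM3⟩ := hMP
    have hM1r : (i':ℝ) < (M:ℝ) := by exact_mod_cast hM1
    have hseg : segment ℝ π.last ((M:ℝ), (j':ℝ)) = Icc (i':ℝ) (M:ℝ) ×ˢ ({(j':ℝ)} : Set ℝ) := by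
      rw [hlast]
      exact segment_horiz hM1r.le
    have himg' : (π.ext ((M:ℝ), (j':ℝ))).image
        = π.image ∪ Icc (i':ℝ) (M:ℝ) ×ˢ ({(j':ℝ)} : Set ℝ) := by
      rw [RectPath.ext_image, hseg]
    have hrect' : (π.ext ((M:ℝ), (j':ℝ))).IsRectilinear := by
      apply RectPath.ext_isRectilinear hrect
      refine Or.inr ⟨?_, ?_⟩
      · rw [hlast]
      · rw [hlast]; exact hM1r
    have hHG' : IsHorizGreedy R B n m δ s (π.ext ((M:ℝ), (j':ℝ))) := by
      refine ⟨⟨hrect', ?_, ?_, ?_⟩, ?_⟩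
      · exact (π.ext_vert_zero _).trans hvert0
      · rw [himg']; exact union_subset himF hM3
      · exact RectPath.ext_vertex_prop
          (fun p => ∃ a b : ℤ, p = ((a:ℝ), (b:ℝ)) ∧ PrefixMin R s.1 a ∧ PrefixMin B s.2 b)
          hvertex ⟨M, j', rfl, hM2, hpmB'⟩
      · intro a b hab hpma hpmb ihat hiha hpmi hsF
        left
        have key : i' ≤ a → (a:ℝ) ≤ (M:ℝ) → b = j' →
            Icc (a:ℝ) (ihat:ℝ) ×ˢ ({(b:ℝ)} : Set ℝ) ⊆ (π.ext ((M:ℝ), (j':ℝ))).image := by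
          intro hia haM hbj
          subst hbj
          have hiaR : (i':ℝ) ≤ (a:ℝ) := by exact_mod_cast hia
          have hihatM : ihat ≤ M := by
            apply hMmax
            refine ⟨lt_of_le_of_lt hia hiha, hpmi, ?_⟩
            intro p hp
            obtain ⟨hp1, hp2⟩ := hp
            rcases le_total p.1 (a:ℝ) with hpa | hpa
            · exact hM3 ⟨⟨hp1.1, le_trans hpa haM⟩, hp2⟩
            · exact hsF ⟨⟨hpa, hp1.2⟩, hp2⟩
          have hihatMr : (ihat:ℝ) ≤ (M:ℝ) := by exact_mod_cast hihatM
          rw [himg']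
          intro p hp
          exact Or.inr ⟨⟨le_trans hiaR hp.1.1, le_trans hp.1.2 hihatMr⟩, hp.2⟩
        rw [himg'] at hab
        rcases hab with hab | hab
        · rcases hgreedy a b hab hpma hpmb ihat hiha hpmi hsF with htrav | hstop
          · rw [himg']
            exact htrav.trans subset_union_left
          · rw [hlast] at hstop
            have h1 : (i':ℝ) = (a:ℝ) := congrArg Prod.fst hstop
            have h2 : (j':ℝ) = (b:ℝ) := congrArg Prod.snd hstop
            have ha : i' = a := by exact_mod_cast h1
            have hb : j' = b := by exact_mod_cast h2
            exact key ha.le (by rw [← ha]; exact hM1r.le) hb.symm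
        · obtain ⟨hab1, hab2⟩ := hab
          have hab1' : (a:ℝ) ∈ Icc (i':ℝ) (M:ℝ) := hab1
          have hab2' : (b:ℝ) = (j':ℝ) := hab2
          have hb : b = j' := by exact_mod_cast hab2'
          have hia : i' ≤ a := by exact_mod_cast hab1'.1
          exact key hia hab1'.2 hb
    have heqim : (π.ext ((M:ℝ), (j':ℝ))).image = π.image :=
      hmaximal _ hHG' (by rw [himg']; exact subset_union_left)
    have hwmem : ((M:ℝ), (j':ℝ)) ∈ (π.ext ((M:ℝ), (j':ℝ))).image := by
      rw [himg']
      exact Or.inr ⟨⟨hM1r.le, le_rfl⟩, rfl⟩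
    rw [heqim] at hwmem
    have hMle : (M:ℝ) ≤ (i':ℝ) := by
      have hb := (RectPath.image_bounds hrect hwmem).2.2.1
      rw [hlast] at hb
      exact hb
    exact absurd hMle (not_le.2 hM1r)
  · -- No horizontal extension is available from (i', j')
    have hih : i' < istar → ∃ ih : ℤ, (i' < ih ∧ ih ≤ istar ∧ R (i':ℝ) < R (ih:ℝ)) ∧
        PrefixMin R s.1 ih ∧
        (∀ z : ℤ, (i' < z ∧ z ≤ istar ∧ R (i':ℝ) < R (z:ℝ)) → ih ≤ z) := by
      intro hlt
      have hRlt : R (i':ℝ) < R (istar:ℝ) := by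
        have h1 : R (i':ℝ) ≤ R (istar:ℝ) := hmax (i':ℝ) ⟨hsi'r, hi'lt.le⟩
        have h2 : R (i':ℝ) ≠ R (istar:ℝ) :=
          gp_int hgpR hi'1 hi'n histar1Z1 histarn (by omega)
        exact lt_of_le_of_ne h1 h2
      obtain ⟨ih, hihP, hihmin⟩ := Int.exists_least_of_bdd
        (P := fun z => i' < z ∧ z ≤ istar ∧ R (i':ℝ) < R (z:ℝ))
        ⟨i' + 1, fun z hz => by omega⟩ ⟨istar, hlt, le_rfl, hRlt⟩
      obtain ⟨hih1, hih2, hih3⟩ := hihP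
      have hih2r : (ih:ℝ) ≤ (istar:ℝ) := by exact_mod_cast hih2
      have hihn : (ih:ℝ) ≤ (n:ℝ) := le_trans hih2r histarn
      refine ⟨ih, ⟨hih1, hih2, hih3⟩, ?_, hihmin⟩
      apply pm_of_R hsepR hs11 hihn (by omega)
      apply poly_le hR hs11 hihn (by omega)
      intro k hk1 hk2
      rcases le_or_gt k i' with hki | hki
      · have hkle := pm_R_le hsepR hs11 hi'n hpmR' (k:ℝ)
          ⟨by exact_mod_cast hk1, by exact_mod_cast hki⟩
        linarith
      · rcases eq_or_lt_of_le hk2 with heq | hklt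
        · exact le_of_eq (by rw [heq])
        · have hnk : ¬ (i' < k ∧ k ≤ istar ∧ R (i':ℝ) < R (k:ℝ)) := fun hP => by
            have := hihmin k hP; omega
          push_neg at hnk
          have := hnk hki (by omega)
          linarith
    by_cases hjj : j' = jstar
    · -- then i' < istar and the row to the next prefix-minimum is free: contradiction
      have hi'lt_star : i' < istar :=
        lt_of_le_of_ne hi'star (fun h => hend ⟨h, hjj⟩)
      obtain ⟨ih, ⟨hih1, hih2, hih3⟩, hihpm, hihmin⟩ := hih hi'lt_star
      apply hA
      refine ⟨ih, hih1, hihpm, ?_⟩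
      intro p hp
      obtain ⟨hp1, hp2⟩ := hp
      rw [mem_singleton_iff] at hp2
      have hih2r : (ih:ℝ) ≤ (istar:ℝ) := by exact_mod_cast hih2
      have hihn : (ih:ℝ) ≤ (n:ℝ) := le_trans hih2r histarn
      refine ⟨⟨le_trans hi'1r hp1.1, le_trans hp1.2 hihn⟩,
        ⟨by rw [hp2]; exact hj'1r, by rw [hp2]; exact hj'm⟩, ?_⟩
      rw [hp2, hjj]
      have := hrow p.1 ⟨le_trans hsi'r hp1.1,
        le_trans hp1.2 (le_trans hih2r histar2')⟩
      linarith
    · -- j' < jstar : vertical extension contradicts maximality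
      have hj'lt_star : j' < jstar := lt_of_le_of_ne hj'star hjj
      have hBlt : B (jstar:ℝ) < B (j':ℝ) := by
        have h1 : B (jstar:ℝ) ≤ B (j':ℝ) := hmin (j':ℝ) ⟨hsj'r, hj'lt.le⟩
        have h2 : B (jstar:ℝ) ≠ B (j':ℝ) :=
          gp_int hgpB hjstar1Z1 hjstarm hj'1 hj'm (by omega)
        exact lt_of_le_of_ne h1 h2
      obtain ⟨jh, hjhP, hjhmin⟩ := Int.exists_least_of_bdd
        (P := fun z => j' < z ∧ z ≤ jstar ∧ B (z:ℝ) < B (j':ℝ))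
        ⟨j' + 1, fun z hz => by omega⟩ ⟨jstar, hj'lt_star, le_rfl, hBlt⟩
      obtain ⟨hjh1, hjh2, hjh3⟩ := hjhP
      have hjhm : (jh:ℝ) ≤ (m:ℝ) := le_trans (by exact_mod_cast hjh2) hjstarm
      have hjht : (jh:ℝ) ≤ (t.2:ℝ) := le_trans (by exact_mod_cast hjh2) hjstar2'
      have hjh1r : (j':ℝ) < (jh:ℝ) := by exact_mod_cast hjh1
      have hpmjh : PrefixMin B s.2 jh := by
        apply pm_of_B hsepB hs21 hjhm (by omega)
        apply poly_ge hB hs21 hjhm (by omega)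
        intro k hk1 hk2
        rcases le_or_gt k j' with hkj | hkj
        · have hkle := pm_B_le hsepB hs21 hj'm hpmB' (k:ℝ)
            ⟨by exact_mod_cast hk1, by exact_mod_cast hkj⟩
          linarith
        · rcases eq_or_lt_of_le hk2 with heq | hklt
          · exact le_of_eq (by rw [heq])
          · have hnk : ¬ (j' < k ∧ k ≤ jstar ∧ B (k:ℝ) < B (j':ℝ)) := fun hP => by
              have := hjhmin k hP; omega
            push_neg at hnk
            have := hnk hkj (by omega)
            linarith
      have hvfree : ∀ y ∈ Icc (j':ℝ) (jh:ℝ), B y ≤ δ + R (i':ℝ) := by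
        rcases eq_or_lt_of_le hi'star with hii | hii
        · intro y hy
          have hyc := hcol y ⟨le_trans hsj'r hy.1, le_trans hy.2 hjht⟩
          rw [← hii] at hyc
          exact hyc
        · by_contra hbl
          push_neg at hbl
          obtain ⟨y, hy, hylt⟩ := hbl
          have hbad : ¬ (∀ k : ℤ, j' ≤ k → k ≤ jh → B (k:ℝ) ≤ δ + R (i':ℝ)) := by
            intro hall
            exact absurd (poly_le hB hj'1 hjhm (by omega) hall y hy) (not_le.2 hylt)
          push_neg at hbad
          obtain ⟨y0, hy01, hy02, hy03⟩ := hbad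
          have hy0ne1 : y0 ≠ j' := by
            intro h
            rw [h] at hy03
            linarith
          have hy0ne2 : y0 ≠ jh := by
            intro h
            rw [h] at hy03
            linarith
          obtain ⟨ih, ⟨hih1, hih2, hih3⟩, hihpm, hihmin⟩ := hih hii
          have hih2r : (ih:ℝ) ≤ (istar:ℝ) := by exact_mod_cast hih2
          have hihn : (ih:ℝ) ≤ (n:ℝ) := le_trans hih2r histarn
          have hhb : ¬ (Icc (i':ℝ) (ih:ℝ) ×ˢ ({(j':ℝ)} : Set ℝ) ⊆ freeSpace R B n m δ) :=
            fun hsub => hA ⟨ih, hih1, hihpm, hsub⟩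
          have hbad2 : ¬ (∀ k : ℤ, i' ≤ k → k ≤ ih → B (j':ℝ) - δ ≤ R (k:ℝ)) := by
            intro hall
            apply hhb
            intro p hp
            obtain ⟨hp1, hp2⟩ := hp
            rw [mem_singleton_iff] at hp2
            have hplb := poly_ge hR hi'1 hihn (by omega) hall p.1 hp1
            refine ⟨⟨le_trans hi'1r hp1.1, le_trans hp1.2 hihn⟩,
              ⟨by rw [hp2]; exact hj'1r, by rw [hp2]; exact hj'm⟩, ?_⟩
            rw [hp2]
            linarith
          push_neg at hbad2
          obtain ⟨x0, hx01, hx02, hx03⟩ := hbad2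
          have hx0ne1 : x0 ≠ i' := by
            intro h
            rw [h] at hx03
            linarith
          have hx0ne2 : x0 ≠ ih := by
            intro h
            rw [h] at hx03
            linarith
          have hy02r : (y0:ℝ) ≤ (jh:ℝ) := by exact_mod_cast hy02
          have hbndB : ∀ z ∈ Icc (s.2:ℝ) ((y0:ℤ):ℝ), B (j':ℝ) ≤ B z := by
            apply poly_ge hB hs21 (le_trans hy02r hjhm) (by omega)
            intro k hk1 hk2
            rcases le_or_gt k j' with hkj | hkj
            · exact pm_B_le hsepB hs21 hj'm hpmB' (k:ℝ)
                ⟨by exact_mod_cast hk1, by exact_mod_cast hkj⟩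
            · have hnk : ¬ (j' < k ∧ k ≤ jstar ∧ B (k:ℝ) < B (j':ℝ)) := fun hP => by
                have := hjhmin k hP; omega
              push_neg at hnk
              exact hnk hkj (by omega)
          have hx02r : (x0:ℝ) ≤ (ih:ℝ) := by exact_mod_cast hx02
          have hbndR : ∀ z ∈ Icc (s.1:ℝ) ((x0:ℤ):ℝ), R z ≤ R (i':ℝ) := by
            apply poly_le hR hs11 (le_trans hx02r hihn) (by omega)
            intro k hk1 hk2
            rcases le_or_gt k i' with hki | hki
            · exact pm_R_le hsepR hs11 hi'n hpmR' (k:ℝ)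
                ⟨by exact_mod_cast hk1, by exact_mod_cast hki⟩
            · have hnk : ¬ (i' < k ∧ k ≤ istar ∧ R (i':ℝ) < R (k:ℝ)) := fun hP => by
                have := hihmin k hP; omega
              push_neg at hnk
              exact hnk hki (by omega)
          have hx01r : (i':ℝ) ≤ (x0:ℝ) := by exact_mod_cast hx01
          have hy01r : (j':ℝ) ≤ (y0:ℝ) := by exact_mod_cast hy01
          have hx0s : (s.1:ℝ) ≤ (x0:ℝ) := le_trans hsi'r hx01r
          have hx0t : (x0:ℝ) ≤ (t.1:ℝ) := le_trans hx02r (le_trans hih2r histar2')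
          have hy0s : (s.2:ℝ) ≤ (y0:ℝ) := le_trans hsj'r hy01r
          have hy0t : (y0:ℝ) ≤ (t.2:ℝ) := le_trans hy02r hjht
          obtain ⟨u1, hu1, hgu1⟩ := hIVTx (x0:ℝ) ⟨hx0s, hx0t⟩
          obtain ⟨u0, hu0, hgu0⟩ := hIVTy (y0:ℝ) ⟨hy0s, hy0t⟩
          have hf1 := (hγF u1 hu1).2.2
          rw [hgu1] at hf1
          have hf0 := (hγF u0 hu0).2.2
          rw [hgu0] at hf0
          have hylt1 : (y0:ℝ) < (γ u1).2 := by
            by_contra hle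
            push_neg at hle
            have := hbndB (γ u1).2 ⟨hylo u1 hu1, hle⟩
            linarith
          have hxlt1 : (x0:ℝ) < (γ u0).1 := by
            by_contra hle
            push_neg at hle
            have := hbndR (γ u0).1 ⟨hxlo u0 hu0, hle⟩
            linarith
          rcases le_total u0 u1 with huu | huu
          · have hcmp : (γ u0).1 ≤ (γ u1).1 := hγx hu0 hu1 huu
            rw [hgu1] at hcmp
            linarith
          · have hcmp : (γ u1).2 ≤ (γ u0).2 := hγy hu1 hu0 huu
            rw [hgu0] at hcmp
            linarith
      have hsegF : ({(i':ℝ)} : Set ℝ) ×ˢ Icc (j':ℝ) (jh:ℝ) ⊆ freeSpace R B n m δ := by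
        intro p hp
        obtain ⟨hp1, hp2⟩ := hp
        rw [mem_singleton_iff] at hp1
        refine ⟨⟨by rw [hp1]; exact hi'1r, by rw [hp1]; exact hi'n⟩,
          ⟨le_trans hj'1r hp2.1, le_trans hp2.2 hjhm⟩, ?_⟩
        rw [hp1]
        have := hvfree p.2 hp2
        linarith
      have hseg : segment ℝ π.last ((i':ℝ), (jh:ℝ))
          = ({(i':ℝ)} : Set ℝ) ×ˢ Icc (j':ℝ) (jh:ℝ) := by
        rw [hlast]
        exact segment_vert hjh1r.le
      have himg' : (π.ext ((i':ℝ), (jh:ℝ))).image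
          = π.image ∪ ({(i':ℝ)} : Set ℝ) ×ˢ Icc (j':ℝ) (jh:ℝ) := by
        rw [RectPath.ext_image, hseg]
      have hrect' : (π.ext ((i':ℝ), (jh:ℝ))).IsRectilinear := by
        apply RectPath.ext_isRectilinear hrect
        refine Or.inl ⟨?_, ?_⟩
        · rw [hlast]
        · rw [hlast]; exact hjh1r
      have hHG' : IsHorizGreedy R B n m δ s (π.ext ((i':ℝ), (jh:ℝ))) := by
        refine ⟨⟨hrect', ?_, ?_, ?_⟩, ?_⟩
        · exact (π.ext_vert_zero _).trans hvert0
        · rw [himg']; exact union_subset himF hsegF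
        · exact RectPath.ext_vertex_prop
            (fun p => ∃ a b : ℤ, p = ((a:ℝ), (b:ℝ)) ∧ PrefixMin R s.1 a ∧ PrefixMin B s.2 b)
            hvertex ⟨i', jh, rfl, hpmR', hpmjh⟩
        · intro a b hab hpma hpmb ihat hiha hpmi hsF
          have hAcontra : a = i' → b = j' → False := by
            intro ha hb
            subst ha
            subst hb
            exact hA ⟨ihat, hiha, hpmi, hsF⟩
          rw [himg'] at hab
          rcases hab with hab | hab
          · rcases hgreedy a b hab hpma hpmb ihat hiha hpmi hsF with htrav | hstop
            · left
              rw [himg']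
              exact htrav.trans subset_union_left
            · rw [hlast] at hstop
              have h1 : (i':ℝ) = (a:ℝ) := congrArg Prod.fst hstop
              have h2 : (j':ℝ) = (b:ℝ) := congrArg Prod.snd hstop
              have ha : i' = a := by exact_mod_cast h1
              have hb : j' = b := by exact_mod_cast h2
              exact (hAcontra ha.symm hb.symm).elim
          · obtain ⟨hab1, hab2⟩ := hab
            have hab1' : (a:ℝ) = (i':ℝ) := hab1
            have hab2' : (b:ℝ) ∈ Icc (j':ℝ) (jh:ℝ) := hab2
            have ha : a = i' := by exact_mod_cast hab1'
            have hbj1 : j' ≤ b := by exact_mod_cast hab2'.1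
            have hbj2 : b ≤ jh := by exact_mod_cast hab2'.2
            have hbj2r : (b:ℝ) ≤ (jh:ℝ) := by exact_mod_cast hbj2
            rcases eq_or_lt_of_le hbj1 with hbeq | hblt
            · exact (hAcontra ha hbeq.symm).elim
            · rcases eq_or_lt_of_le hbj2 with hbeq2 | hblt2
              · right
                rw [RectPath.ext_last, ha, hbeq2]
              · exfalso
                have h1 : B (b:ℝ) ≤ B (j':ℝ) :=
                  pm_B_le hsepB hs21 (le_trans hbj2r hjhm) hpmb (j':ℝ)
                    ⟨hsj'r, by exact_mod_cast hblt.le⟩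
                have hnk : ¬ (j' < b ∧ b ≤ jstar ∧ B (b:ℝ) < B (j':ℝ)) := fun hP => by
                  have := hjhmin b hP
                  omega
                push_neg at hnk
                have h2 := hnk hblt (by omega)
                exact gp_int hgpB (by omega) (le_trans hbj2r hjhm) hj'1 hj'm
                  (by omega) (le_antisymm h1 h2)
      have heqim : (π.ext ((i':ℝ), (jh:ℝ))).image = π.image :=
        hmaximal _ hHG' (by rw [himg']; exact subset_union_left)
      have hwmem : ((i':ℝ), (jh:ℝ)) ∈ (π.ext ((i':ℝ), (jh:ℝ))).image := by
        rw [himg']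
        exact Or.inr ⟨rfl, ⟨hjh1r.le, le_rfl⟩⟩
      rw [heqim] at hwmem
      have hjhle : (jh:ℝ) ≤ (j':ℝ) := by
        have hb := (RectPath.image_bounds hrect hwmem).2.2.2
        rw [hlast] at hb
        exact hb
      exact absurd hjhle (not_le.2 hjh1r)
end
end

section
/- Let s and s' be integer points of F_δ and let π and π' be maximal horizontal-greedy δ-matchings starting at s and s', respectively. If the images of π and π' share a point p = (p₁, p₂), then the paths are identical from p onwards: (image of π) ∩ ([p₁, n] × [p₂, m]) = (image of π') ∩ ([p₁, n] × [p₂, m]). -/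
open Set

noncomputable section

namespace GPMaux
open Set

lemma seg_horiz {a b y : ℝ} (h : a ≤ b) :
    segment ℝ (a, y) (b, y) = Icc a b ×ˢ ({y} : Set ℝ) := by
  ext ⟨q1, q2⟩
  rw [segment_eq_image']
  simp only [mem_image, mem_prod, mem_Icc, mem_singleton_iff, Prod.mk_sub_mk, Prod.smul_mk,
    Prod.mk_add_mk, smul_eq_mul, sub_self, mul_zero, add_zero, Prod.mk.injEq, mem_Icc]
  constructor
  · rintro ⟨t, ⟨ht0, ht1⟩, h1, h2⟩
    exact ⟨⟨by nlinarith, by nlinarith⟩, h2.symm⟩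
  · rintro ⟨⟨h1, h2⟩, h3⟩
    rcases eq_or_lt_of_le h with hab | hab
    · exact ⟨0, ⟨le_refl 0, zero_le_one⟩, by linarith [h1, h2, hab ▸ h2], h3.symm⟩
    · refine ⟨(q1 - a) / (b - a), ⟨div_nonneg (by linarith) (by linarith), ?_⟩, ?_, h3.symm⟩
      · rw [div_le_one (by linarith)]; linarith
      · rw [div_mul_cancel₀ _ (by linarith : b - a ≠ 0)]; ring

lemma seg_vert {a b x : ℝ} (h : a ≤ b) :
    segment ℝ (x, a) (x, b) = ({x} : Set ℝ) ×ˢ Icc a b := by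
  ext ⟨q1, q2⟩
  rw [segment_eq_image']
  simp only [mem_image, mem_prod, mem_Icc, mem_singleton_iff, Prod.mk_sub_mk, Prod.smul_mk,
    Prod.mk_add_mk, smul_eq_mul, sub_self, mul_zero, add_zero, Prod.mk.injEq, mem_Icc]
  constructor
  · rintro ⟨t, ⟨ht0, ht1⟩, h1, h2⟩
    exact ⟨h1.symm, by nlinarith, by nlinarith⟩
  · rintro ⟨h3, h1, h2⟩
    rcases eq_or_lt_of_le h with hab | hab
    · exact ⟨0, ⟨le_refl 0, zero_le_one⟩, h3.symm, by linarith [hab ▸ h2]⟩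
    · refine ⟨(q2 - a) / (b - a), ⟨div_nonneg (by linarith) (by linarith), ?_⟩, h3.symm, ?_⟩
      · rw [div_le_one (by linarith)]; linarith
      · rw [div_mul_cancel₀ _ (by linarith : b - a ≠ 0)]; ring

lemma edge_horiz_char {u v : ℝ × ℝ} (h1 : u.2 = v.2) (h2 : u.1 ≤ v.1) :
    segment ℝ u v = Icc u.1 v.1 ×ˢ ({u.2} : Set ℝ) := by
  have hu : u = (u.1, u.2) := rfl
  rw [show v = (v.1, u.2) by rw [h1], hu]
  exact seg_horiz h2

lemma edge_vert_char {u v : ℝ × ℝ} (h1 : u.1 = v.1) (h2 : u.2 ≤ v.2) :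
    segment ℝ u v = ({u.1} : Set ℝ) ×ˢ Icc u.2 v.2 := by
  have hu : u = (u.1, u.2) := rfl
  rw [show v = (u.1, v.2) by rw [h1], hu]
  exact seg_vert h2

lemma mem_image_iff (π : RectPath) {q : ℝ × ℝ} :
    q ∈ π.image ↔ q = π.vert 0 ∨
      ∃ k : Fin π.N, q ∈ segment ℝ (π.vert k.castSucc) (π.vert k.succ) := by
  simp [RectPath.image]

lemma edge_le {π : RectPath} (hr : π.IsRectilinear) (k : Fin π.N) :
    π.vert k.castSucc ≤ π.vert k.succ := by
  rcases hr k with ⟨h1, h2⟩ | ⟨h1, h2⟩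
  · exact ⟨le_of_eq h1, le_of_lt h2⟩
  · exact ⟨le_of_lt h2, le_of_eq h1⟩

lemma vert_mono {π : RectPath} (hr : π.IsRectilinear) : Monotone π.vert :=
  Fin.monotone_iff_le_succ.mpr fun k => edge_le hr k

lemma mem_edge_between {π : RectPath} (hr : π.IsRectilinear) {k : Fin π.N} {q : ℝ × ℝ}
    (h : q ∈ segment ℝ (π.vert k.castSucc) (π.vert k.succ)) :
    π.vert k.castSucc ≤ q ∧ q ≤ π.vert k.succ := by
  have := segment_subset_Icc (edge_le hr k) h
  exact ⟨this.1, this.2⟩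

lemma vert_mem_image (π : RectPath) (k : Fin (π.N + 1)) : π.vert k ∈ π.image := by
  induction k using Fin.cases with
  | zero => exact Or.inl rfl
  | succ j => exact Or.inr (mem_iUnion.mpr ⟨j, right_mem_segment ℝ _ _⟩)

lemma start_le {π : RectPath} (hr : π.IsRectilinear) {q : ℝ × ℝ} (hq : q ∈ π.image) :
    π.vert 0 ≤ q := by
  rcases (mem_image_iff π).mp hq with h | ⟨k, hk⟩
  · exact h.ge
  · exact le_trans (vert_mono hr (Fin.zero_le _)) (mem_edge_between hr hk).1

lemma le_last {π : RectPath} (hr : π.IsRectilinear) {q : ℝ × ℝ} (hq : q ∈ π.image) :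
    q ≤ π.last := by
  rcases (mem_image_iff π).mp hq with h | ⟨k, hk⟩
  · exact h.le.trans (vert_mono hr (Fin.zero_le _))
  · exact le_trans (mem_edge_between hr hk).2 (vert_mono hr (Fin.le_last _))

lemma comparable_of_same_edge {π : RectPath} (hr : π.IsRectilinear) {k : Fin π.N} {q r : ℝ × ℝ}
    (hq : q ∈ segment ℝ (π.vert k.castSucc) (π.vert k.succ))
    (hqr : r ∈ segment ℝ (π.vert k.castSucc) (π.vert k.succ)) : q ≤ r ∨ r ≤ q := by
  rcases hr k with ⟨h1, h2⟩ | ⟨h1, h2⟩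
  · rw [edge_vert_char h1 h2.le] at hq hqr
    rcases hq with ⟨hq1, hq2⟩; rcases hqr with ⟨hr1, hr2⟩
    simp only [mem_singleton_iff] at hq1 hr1
    rcases le_total q.2 r.2 with h | h
    · exact Or.inl ⟨by rw [hq1, hr1], h⟩
    · exact Or.inr ⟨by rw [hq1, hr1], h⟩
  · rw [edge_horiz_char h1 h2.le] at hq hqr
    rcases hq with ⟨hq1, hq2⟩; rcases hqr with ⟨hr1, hr2⟩
    simp only [mem_singleton_iff] at hq2 hr2
    rcases le_total q.1 r.1 with h | h
    · exact Or.inl ⟨h, by rw [hq2, hr2]⟩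
    · exact Or.inr ⟨h, by rw [hq2, hr2]⟩

lemma comparable {π : RectPath} (hr : π.IsRectilinear) {q r : ℝ × ℝ}
    (hq : q ∈ π.image) (hqr : r ∈ π.image) : q ≤ r ∨ r ≤ q := by
  rcases (mem_image_iff π).mp hq with h | ⟨k, hk⟩
  · exact Or.inl (h ▸ start_le hr hqr)
  rcases (mem_image_iff π).mp hqr with h | ⟨l, hl⟩
  · exact Or.inr (h ▸ start_le hr hq)
  rcases lt_trichotomy k l with hkl | hkl | hkl
  · left
    have h1 : k.succ ≤ l.castSucc := by
      simp only [Fin.le_def, Fin.lt_def, Fin.coe_castSucc, Fin.val_succ] at hkl ⊢; omega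
    exact le_trans (mem_edge_between hr hk).2
      (le_trans (vert_mono hr h1) (mem_edge_between hr hl).1)
  · subst hkl; exact comparable_of_same_edge hr hk hl
  · right
    have h1 : l.succ ≤ k.castSucc := by
      simp only [Fin.le_def, Fin.lt_def, Fin.coe_castSucc, Fin.val_succ] at hkl ⊢; omega
    exact le_trans (mem_edge_between hr hl).2
      (le_trans (vert_mono hr h1) (mem_edge_between hr hk).1)

end GPMaux

namespace GPMaux
open scoped Classical

def Suffix (π : RectPath) (p : ℝ × ℝ) : Set (ℝ × ℝ) := π.image ∩ {q | p ≤ q}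

lemma suffix_last {π : RectPath} (hr : π.IsRectilinear) {p : ℝ × ℝ} (h : p = π.last) :
    Suffix π p = {p} := by
  ext q
  constructor
  · rintro ⟨hq, hpq⟩
    exact le_antisymm (h ▸ le_last hr hq) hpq |>.symm ▸ rfl
  · rintro rfl
    exact ⟨h ▸ vert_mem_image π (Fin.last π.N), mem_setOf.mpr (le_refl _)⟩

lemma exists_next {π : RectPath} (hr : π.IsRectilinear) {p : ℝ × ℝ}
    (hp : p ∈ π.image) (hl : p ≠ π.last) :
    ∃ k : Fin π.N, p ∈ segment ℝ (π.vert k.castSucc) (π.vert k.succ) ∧ p ≠ π.vert k.succ := by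
  have hN0 : π.N ≠ 0 := by
    intro h0
    rcases (mem_image_iff π).mp hp with h | ⟨k, hk⟩
    · apply hl
      rw [h, RectPath.last]
      congr 1
      exact Fin.ext (by simp [h0])
    · exact absurd k.isLt (by omega)
  set U : Finset (Fin π.N) :=
    Finset.univ.filter (fun k => p ∈ segment ℝ (π.vert k.castSucc) (π.vert k.succ)) with hU
  have hne : U.Nonempty := by
    rcases (mem_image_iff π).mp hp with h | ⟨k, hk⟩
    · refine ⟨⟨0, Nat.pos_of_ne_zero hN0⟩, Finset.mem_filter.mpr ⟨Finset.mem_univ _, ?_⟩⟩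
      have h0 : (⟨0, Nat.pos_of_ne_zero hN0⟩ : Fin π.N).castSucc = (0 : Fin (π.N + 1)) := by
        exact Fin.ext (by simp)
      rw [h0, ← h]
      exact left_mem_segment ℝ p _
    · exact ⟨k, Finset.mem_filter.mpr ⟨Finset.mem_univ _, hk⟩⟩
  set k' := U.max' hne with hk'
  have hk'mem : p ∈ segment ℝ (π.vert k'.castSucc) (π.vert k'.succ) :=
    (Finset.mem_filter.mp (U.max'_mem hne)).2
  by_cases hps : p = π.vert k'.succ
  · exfalso
    rcases Nat.lt_or_ge ((k' : ℕ) + 1) π.N with hlt | hge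
    · set k2 : Fin π.N := ⟨(k' : ℕ) + 1, hlt⟩ with hk2
      have hcs : k2.castSucc = k'.succ := Fin.ext (by simp [hk2])
      have hmem2 : k2 ∈ U := by
        refine Finset.mem_filter.mpr ⟨Finset.mem_univ _, ?_⟩
        rw [hcs, ← hps]
        exact left_mem_segment ℝ p _
      have := U.le_max' k2 hmem2
      rw [← hk'] at this
      exact absurd this (by simp [Fin.le_def, hk2])
    · apply hl
      rw [hps, RectPath.last]
      congr 1
      exact Fin.ext (by simp; omega)
  · exact ⟨k', hk'mem, hps⟩

lemma suffix_split {π : RectPath} (hr : π.IsRectilinear) {k : Fin π.N} {p q : ℝ × ℝ}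
    (hp : p ∈ segment ℝ (π.vert k.castSucc) (π.vert k.succ))
    (hq : q ∈ segment ℝ (π.vert k.castSucc) (π.vert k.succ)) (hpq : p ≤ q) :
    Suffix π p = segment ℝ p q ∪ Suffix π q := by
  have hqim : q ∈ π.image := (mem_image_iff π).mpr (Or.inr ⟨k, hq⟩)
  ext r
  constructor
  · rintro ⟨hrim, hpr⟩
    rcases comparable hr hrim hqim with h | h
    · -- r ≤ q : r ∈ segment p q
      left
      rcases hr k with ⟨h1, h2⟩ | ⟨h1, h2⟩
      · -- vertical edge
        have hc : p.1 = q.1 := by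
          rw [edge_vert_char h1 h2.le] at hp hq
          rw [hp.1, hq.1]
        rw [edge_vert_char hc hpq.2]
        exact ⟨le_antisymm (hc ▸ h.1) hpr.1 ▸ rfl, hpr.2, h.2⟩
      · have hc : p.2 = q.2 := by
          rw [edge_horiz_char h1 h2.le] at hp hq
          rw [hp.2, hq.2]
        rw [edge_horiz_char hc hpq.1]
        exact ⟨⟨hpr.1, h.1⟩, le_antisymm (hc ▸ h.2) hpr.2 ▸ rfl⟩
    · exact Or.inr ⟨hrim, h⟩
  · rintro (h | ⟨hrim, hqr⟩)
    · have hsub : segment ℝ p q ⊆ segment ℝ (π.vert k.castSucc) (π.vert k.succ) :=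
        (convex_segment _ _).segment_subset hp hq
      exact ⟨(mem_image_iff π).mpr (Or.inr ⟨k, hsub h⟩), (segment_subset_Icc hpq h).1⟩
    · exact ⟨hrim, le_trans hpq hqr⟩

noncomputable def pmeasure (π : RectPath) (p : ℝ × ℝ) : ℕ :=
  (Finset.univ.filter (fun k : Fin π.N => ¬ π.vert k.succ ≤ p)).card

lemma pmeasure_mono (π : RectPath) {p q : ℝ × ℝ} (hpq : p ≤ q) :
    pmeasure π q ≤ pmeasure π p := by
  apply Finset.card_le_card
  intro k hk
  rw [Finset.mem_filter] at hk ⊢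
  exact ⟨hk.1, fun h => hk.2 (h.trans hpq)⟩

lemma pmeasure_lt (π : RectPath) {p q : ℝ × ℝ} (hpq : p ≤ q) {k : Fin π.N}
    (h1 : ¬ π.vert k.succ ≤ p) (h2 : π.vert k.succ ≤ q) : pmeasure π q < pmeasure π p := by
  apply Finset.card_lt_card
  rw [Finset.ssubset_iff_of_subset]
  · exact ⟨k, Finset.mem_filter.mpr ⟨Finset.mem_univ _, h1⟩, by simp [h2]⟩
  · intro l hl
    rw [Finset.mem_filter] at hl ⊢
    exact ⟨hl.1, fun h => hl.2 (h.trans hpq)⟩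

lemma iUnion_fin_succ {α : Type*} {N : ℕ} (g : Fin (N + 1) → Set α) :
    (⋃ k, g k) = (⋃ k : Fin N, g k.castSucc) ∪ g (Fin.last N) := by
  ext x
  simp only [mem_iUnion, mem_union]
  constructor
  · rintro ⟨k, hk⟩
    induction k using Fin.lastCases with
    | last => exact Or.inr hk
    | cast j => exact Or.inl ⟨j, hk⟩
  · rintro (⟨j, hj⟩ | h)
    exacts [⟨j.castSucc, hj⟩, ⟨Fin.last N, h⟩]

abbrev snocPath (π : RectPath) (w : ℝ × ℝ) : RectPath := ⟨π.N + 1, Fin.snoc π.vert w⟩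

lemma snocPath_last (π : RectPath) (w : ℝ × ℝ) : (snocPath π w).last = w := by
  simp [snocPath, RectPath.last, Fin.snoc_last]

lemma snocPath_vert_castSucc (π : RectPath) (w : ℝ × ℝ) (k : Fin (π.N + 1)) :
    (snocPath π w).vert k.castSucc = π.vert k := by
  simp [snocPath, Fin.snoc_castSucc]

lemma snocPath_vert_zero (π : RectPath) (w : ℝ × ℝ) :
    (snocPath π w).vert 0 = π.vert 0 := by
  rw [show (0 : Fin (π.N + 1 + 1)) = (0 : Fin (π.N + 1)).castSucc by simp]
  exact snocPath_vert_castSucc π w 0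

lemma snocPath_image (π : RectPath) (w : ℝ × ℝ) :
    (snocPath π w).image = π.image ∪ segment ℝ π.last w := by
  unfold RectPath.image
  rw [snocPath_vert_zero, Set.insert_union]
  congr 1
  show (⋃ k : Fin (π.N + 1), _) = _
  rw [iUnion_fin_succ (fun k : Fin (π.N + 1) =>
    segment ℝ ((snocPath π w).vert k.castSucc) ((snocPath π w).vert k.succ))]
  congr 1
  · apply iUnion_congr
    intro j
    rw [show (j.castSucc : Fin (π.N + 1)).succ = (j.succ).castSucc from (Fin.succ_castSucc j).symm ▸ rfl]
    rw [snocPath_vert_castSucc, snocPath_vert_castSucc]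
  · rw [snocPath_vert_castSucc, show ((Fin.last π.N).succ) = Fin.last (π.N + 1) from Fin.succ_last π.N]
    show segment ℝ (π.vert (Fin.last π.N)) ((snocPath π w).vert (Fin.last (π.N + 1))) = _
    rw [show (snocPath π w).vert (Fin.last (π.N + 1)) = w from snocPath_last π w]
    rfl

lemma snocPath_rect {π : RectPath} (hr : π.IsRectilinear) {w : ℝ × ℝ}
    (hw : (π.last.1 = w.1 ∧ π.last.2 < w.2) ∨ (π.last.2 = w.2 ∧ π.last.1 < w.1)) :
    (snocPath π w).IsRectilinear := by
  intro k
  induction k using Fin.lastCases with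
  | last =>
    rw [show ((Fin.last (π.N)).succ) = Fin.last (π.N + 1) from Fin.succ_last π.N]
    rw [snocPath_vert_castSucc]
    show ((π.vert (Fin.last π.N)).1 = ((snocPath π w).vert (Fin.last (π.N + 1))).1 ∧ _) ∨ _
    rw [show (snocPath π w).vert (Fin.last (π.N + 1)) = w from snocPath_last π w]
    exact hw
  | cast j =>
    rw [show (j.castSucc : Fin (π.N + 1)).succ = (j.succ).castSucc from (Fin.succ_castSucc j).symm ▸ rfl]
    rw [snocPath_vert_castSucc, snocPath_vert_castSucc]
    exact hr j

end GPMaux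

namespace GPMaux

lemma PrefixMin.trans' {A : ℝ → ℝ} {s1 s2 i b : ℤ}
    (hi : PrefixMin A s1 i) (hb : PrefixMin A s2 b) (h1 : s2 ≤ i) (h2 : i ≤ b) :
    PrefixMin A s1 b := by
  refine ⟨hi.1.trans h2, fun x hx => ?_⟩
  rcases le_total x (i : ℝ) with h | h
  · calc |A (b : ℝ)| ≤ |A (i : ℝ)| := hb.2 _ ⟨by exact_mod_cast h1, by exact_mod_cast h2⟩
      _ ≤ |A x| := hi.2 x ⟨hx.1, h⟩
  · exact hb.2 x ⟨le_trans (by exact_mod_cast h1) h, hx.2⟩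

lemma poly_min {B : ℝ → ℝ} {m : ℕ} (hB : IsPoly1D B m) :
    ∀ (d : ℕ) (c j : ℤ), 1 ≤ c → c ≤ j → (j : ℝ) ≤ (m : ℝ) → (j - c).toNat = d →
    ∃ e : ℤ, c ≤ e ∧ e ≤ j ∧ ∀ y ∈ Icc (c : ℝ) (j : ℝ), B (e : ℝ) ≤ B y := by
  intro d
  induction d with
  | zero =>
    intro c j h1 h2 h3 h4
    have hjc : j = c := by omega
    subst hjc
    refine ⟨j, le_refl _, le_refl _, fun y hy => ?_⟩
    have : y = (j : ℝ) := le_antisymm hy.2 hy.1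
    rw [this]
  | succ d ih =>
    intro c j h1 h2 h3 h4
    have hcj : c < j := by omega
    have hjm : j ≤ (m : ℤ) := by exact_mod_cast h3
    obtain ⟨e₁, he1, he2, he3⟩ := ih c (j - 1) h1 (by omega) (by push_cast; linarith) (by omega)
    have hj1 : ((j - 1 : ℤ) : ℝ) = (j : ℝ) - 1 := by push_cast; ring
    rw [hj1] at he3
    have hcj1 : (c : ℝ) ≤ (j : ℝ) - 1 := by
      have h5 : c ≤ j - 1 := by omega
      have h6 : ((c : ℤ) : ℝ) ≤ ((j - 1 : ℤ) : ℝ) := Int.cast_le.mpr h5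
      push_cast at h6; linarith
    -- the affine bound on [j-1, j]
    have hmin : ∀ y ∈ Icc ((j : ℝ) - 1) (j : ℝ), B ((j : ℝ) - 1) ≤ B y ∨ B (j : ℝ) ≤ B y := by
      intro y hy
      set k : ℕ := (j - 1).toNat with hk
      have hkz : ((k : ℕ) : ℤ) = j - 1 := Int.toNat_of_nonneg (by omega)
      have hkr : (k : ℝ) = (j : ℝ) - 1 := by
        have := congrArg (fun z : ℤ => (z : ℝ)) hkz
        push_cast at this; linarith
      have h1k : 1 ≤ k := by omega
      have h2k : k < m := by omega
      have hBy := hB k h1k h2k y ⟨by rw [hkr]; exact hy.1, by rw [hkr]; linarith [hy.2]⟩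
      rw [show (k : ℝ) + 1 = (j : ℝ) from by rw [hkr]; ring, hkr] at hBy
      rcases le_total (B ((j:ℝ) - 1)) (B (j:ℝ)) with hc | hc
      · left; rw [hBy]; nlinarith [hy.1, hy.2]
      · right; rw [hBy]; nlinarith [hy.1, hy.2]
    classical
    refine ⟨if B (e₁ : ℝ) ≤ B (j : ℝ) then e₁ else j, ?_, ?_, ?_⟩
    · split <;> omega
    · split <;> omega
    · intro y hy
      have hele1 : B ((if B (e₁ : ℝ) ≤ B (j : ℝ) then e₁ else j : ℤ) : ℝ) ≤ B ((e₁ : ℤ) : ℝ) := by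
        split
        · exact le_refl _
        · next hcond => push_neg at hcond; exact hcond.le
      have helej : B ((if B (e₁ : ℝ) ≤ B (j : ℝ) then e₁ else j : ℤ) : ℝ) ≤ B ((j : ℤ) : ℝ) := by
        split
        · next hcond => exact hcond
        · exact le_refl _
      rcases le_total y ((j : ℝ) - 1) with h | h
      · exact le_trans hele1 (he3 y ⟨hy.1, h⟩)
      · rcases hmin y ⟨h, hy.2⟩ with h' | h'
        · exact le_trans (le_trans hele1 (he3 ((j:ℝ) - 1) ⟨hcj1, le_refl _⟩)) h'
        · exact le_trans helej h'

end GPMaux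

namespace GPMaux

lemma mem_prod_char {a b y : ℝ} {z : ℝ × ℝ} :
    z ∈ Icc a b ×ˢ ({y} : Set ℝ) ↔ (a ≤ z.1 ∧ z.1 ≤ b) ∧ z.2 = y := by
  rw [Set.mem_prod, mem_Icc, mem_singleton_iff]

lemma mem_prod_mk {a b y x2 : ℝ} (h1 : a ≤ x2) (h2 : x2 ≤ b) :
    ((x2, y) : ℝ × ℝ) ∈ Icc a b ×ˢ ({y} : Set ℝ) := mem_prod_char.mpr ⟨⟨h1, h2⟩, rfl⟩

lemma stop_horiz {R B : ℝ → ℝ} {n m : ℕ} {δ : ℝ} {s : ℤ × ℤ} {π : RectPath}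
    (hmax : IsMaximalHG R B n m δ s π) {i j b : ℤ}
    (hlast : π.last = ((i : ℝ), (j : ℝ)))
    (hib : i < b) (hpmb : PrefixMin R s.1 b)
    (hfree : Icc (i : ℝ) (b : ℝ) ×ˢ ({(j : ℝ)} : Set ℝ) ⊆ freeSpace R B n m δ) : False := by
  classical
  obtain ⟨⟨⟨hrect, hv0, himfree, hverts⟩, hgreedy⟩, hmaxi⟩ := hmax
  -- prefix-minimality of (i, j)
  obtain ⟨i0, j0, hv, hpmi0, hpmj0⟩ := hverts (Fin.last π.N)
  have hv' : ((i0 : ℝ), (j0 : ℝ)) = ((i : ℝ), (j : ℝ)) := hv.symm.trans hlast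
  rw [Prod.mk.injEq] at hv'
  have hi0 : i0 = i := by exact_mod_cast hv'.1
  have hj0 : j0 = j := by exact_mod_cast hv'.2
  have hpmi : PrefixMin R s.1 i := hi0 ▸ hpmi0
  have hpmj : PrefixMin B s.2 j := hj0 ▸ hpmj0
  -- the candidate set
  set S : Finset ℤ := (Finset.Icc (i + 1) (n : ℤ)).filter
    (fun ih => PrefixMin R s.1 ih ∧
      Icc (i : ℝ) (ih : ℝ) ×ˢ ({(j : ℝ)} : Set ℝ) ⊆ freeSpace R B n m δ) with hS
  have hSmem : ∀ ih : ℤ, ih ∈ S ↔ (i + 1 ≤ ih ∧ ih ≤ (n : ℤ)) ∧ PrefixMin R s.1 ih ∧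
      Icc (i : ℝ) (ih : ℝ) ×ˢ ({(j : ℝ)} : Set ℝ) ⊆ freeSpace R B n m δ := by
    intro ih; rw [hS, Finset.mem_filter, Finset.mem_Icc]
  have hbn : b ≤ (n : ℤ) := by
    have h7 := hfree (mem_prod_mk (Int.cast_le.mpr hib.le) (le_refl _))
    have h8 : (b : ℝ) ≤ (n : ℝ) := h7.1.2
    exact_mod_cast h8
  have hbS : b ∈ S := (hSmem b).mpr ⟨⟨by omega, hbn⟩, hpmb, hfree⟩
  set istar := S.max' ⟨b, hbS⟩ with histar
  obtain ⟨⟨hist1, hist2⟩, hpmstar, hfreestar⟩ := (hSmem istar).mp (S.max'_mem ⟨b, hbS⟩)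
  have histi : i < istar := by omega
  set w : ℝ × ℝ := ((istar : ℝ), (j : ℝ)) with hw
  have hrectex : (snocPath π w).IsRectilinear := by
    refine snocPath_rect hrect (Or.inr ⟨?_, ?_⟩)
    · rw [hlast]
    · rw [hlast]; exact Int.cast_lt.mpr histi
  have himex : (snocPath π w).image = π.image ∪ Icc (i : ℝ) (istar : ℝ) ×ˢ ({(j : ℝ)} : Set ℝ) := by
    rw [snocPath_image, hlast, hw, seg_horiz (Int.cast_le.mpr histi.le)]
  have hHG : IsHorizGreedy R B n m δ s (snocPath π w) := by
    refine ⟨⟨hrectex, by rw [snocPath_vert_zero]; exact hv0, ?_, ?_⟩, ?_⟩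
    · rw [himex]; exact union_subset himfree hfreestar
    · intro k
      induction k using Fin.lastCases with
      | last =>
        refine ⟨istar, j, ?_, hpmstar, hpmj⟩
        exact snocPath_last π w
      | cast l =>
        rw [snocPath_vert_castSucc]; exact hverts l
    · intro i1 j1 hpt hpmi1 hpmj1 ih hlt hpmih hfri
      rw [himex] at hpt
      rcases hpt with hold | hnew
      · rcases hgreedy i1 j1 hold hpmi1 hpmj1 ih hlt hpmih hfri with hseg | hl
        · left; rw [himex]; exact hseg.trans subset_union_left
        · -- i1 = i, j1 = j
          rw [hlast, Prod.mk.injEq] at hl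
          have hi1 : i1 = i := by exact_mod_cast hl.1.symm
          have hj1 : j1 = j := by exact_mod_cast hl.2.symm
          subst hi1; subst hj1
          have hihn : ih ≤ (n : ℤ) := by
            have h7 := hfri (mem_prod_mk (Int.cast_le.mpr hlt.le) (le_refl _))
            have h8 : (ih : ℝ) ≤ (n : ℝ) := h7.1.2
            exact_mod_cast h8
          have hihS : ih ∈ S := (hSmem ih).mpr ⟨⟨by omega, hihn⟩, hpmih, hfri⟩
          have hihle : ih ≤ istar := S.le_max' ih hihS
          left
          rw [himex]
          intro z hz
          rcases mem_prod_char.mp hz with ⟨⟨hz1, hz2⟩, hz3⟩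
          exact Or.inr (mem_prod_char.mpr ⟨⟨hz1, hz2.trans (Int.cast_le.mpr hihle)⟩, hz3⟩)
      · -- (i1, j1) on the new segment
        rcases mem_prod_char.mp hnew with ⟨⟨hn1, hn2⟩, hn3⟩
        have hn3' : (j1 : ℝ) = (j : ℝ) := hn3
        have hn1' : (i : ℝ) ≤ (i1 : ℝ) := hn1
        have hn2' : (i1 : ℝ) ≤ (istar : ℝ) := hn2
        have hj1 : j1 = j := by exact_mod_cast hn3'
        rw [hj1] at hfri ⊢
        have hii1 : i ≤ i1 := by exact_mod_cast hn1'
        have hi1star : i1 ≤ istar := by exact_mod_cast hn2'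
        have hfr2 : Icc (i : ℝ) (ih : ℝ) ×ˢ ({(j : ℝ)} : Set ℝ) ⊆ freeSpace R B n m δ := by
          intro z hz
          rcases mem_prod_char.mp hz with ⟨⟨hz1, hz2⟩, hz3⟩
          rcases le_total z.1 (i1 : ℝ) with h | h
          · exact hfreestar (mem_prod_char.mpr ⟨⟨hz1, h.trans (Int.cast_le.mpr hi1star)⟩, hz3⟩)
          · exact hfri (mem_prod_char.mpr ⟨⟨h, hz2⟩, hz3⟩)
        have hihn : ih ≤ (n : ℤ) := by
          have h7 := hfri (mem_prod_mk (Int.cast_le.mpr hlt.le) (le_refl _))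
          have h8 : (ih : ℝ) ≤ (n : ℝ) := h7.1.2
          exact_mod_cast h8
        have hihS : ih ∈ S := (hSmem ih).mpr ⟨⟨by omega, hihn⟩, hpmih, hfr2⟩
        have hihle : ih ≤ istar := S.le_max' ih hihS
        left
        rw [himex]
        intro z hz
        rcases mem_prod_char.mp hz with ⟨⟨hz1, hz2⟩, hz3⟩
        refine Or.inr (mem_prod_char.mpr ⟨⟨(Int.cast_le.mpr hii1).trans hz1,
          hz2.trans (Int.cast_le.mpr hihle)⟩, hz3⟩)
  have heq := hmaxi (snocPath π w) hHG (by rw [himex]; exact subset_union_left)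
  have hwmem : w ∈ (snocPath π w).image := by
    rw [himex]
    exact Or.inr (mem_prod_mk (Int.cast_le.mpr histi.le) (le_refl _))
  rw [heq] at hwmem
  have hle := (le_last hrect hwmem).1
  rw [hlast] at hle
  have hle2 : (istar : ℝ) ≤ (i : ℝ) := hle
  have : istar ≤ i := by exact_mod_cast hle2
  omega

end GPMaux

namespace GPMaux

lemma mem_prod_charV {x a b : ℝ} {z : ℝ × ℝ} :
    z ∈ ({x} : Set ℝ) ×ˢ Icc a b ↔ z.1 = x ∧ (a ≤ z.2 ∧ z.2 ≤ b) := by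
  rw [Set.mem_prod, mem_Icc, mem_singleton_iff]

lemma mem_prod_mkV {x a b y2 : ℝ} (h1 : a ≤ y2) (h2 : y2 ≤ b) :
    ((x, y2) : ℝ × ℝ) ∈ ({x} : Set ℝ) ×ˢ Icc a b := mem_prod_charV.mpr ⟨rfl, h1, h2⟩

lemma stop_vert {R B : ℝ → ℝ} {n m : ℕ} {δ : ℝ} {s : ℤ × ℤ} {π : RectPath}
    (hmax : IsMaximalHG R B n m δ s π) {i j d : ℤ}
    (hlast : π.last = ((i : ℝ), (j : ℝ)))
    (hnoh : ∀ ih : ℤ, i < ih → PrefixMin R s.1 ih →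
      ¬ (Icc (i : ℝ) (ih : ℝ) ×ˢ ({(j : ℝ)} : Set ℝ) ⊆ freeSpace R B n m δ))
    (hjd : j < d) (hpmd : PrefixMin B s.2 d)
    (hfree : ({(i : ℝ)} : Set ℝ) ×ˢ Icc (j : ℝ) (d : ℝ) ⊆ freeSpace R B n m δ) : False := by
  classical
  obtain ⟨⟨⟨hrect, hv0, himfree, hverts⟩, hgreedy⟩, hmaxi⟩ := hmax
  obtain ⟨i0, j0, hv, hpmi0, hpmj0⟩ := hverts (Fin.last π.N)
  have hv' : ((i0 : ℝ), (j0 : ℝ)) = ((i : ℝ), (j : ℝ)) := hv.symm.trans hlast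
  rw [Prod.mk.injEq] at hv'
  have hi0 : i0 = i := by exact_mod_cast hv'.1
  have hj0 : j0 = j := by exact_mod_cast hv'.2
  have hpmi : PrefixMin R s.1 i := hi0 ▸ hpmi0
  have hpmj : PrefixMin B s.2 j := hj0 ▸ hpmj0
  set S : Finset ℤ := (Finset.Icc (j + 1) (m : ℤ)).filter
    (fun e => PrefixMin B s.2 e ∧
      ({(i : ℝ)} : Set ℝ) ×ˢ Icc (j : ℝ) (e : ℝ) ⊆ freeSpace R B n m δ) with hS
  have hSmem : ∀ e : ℤ, e ∈ S ↔ (j + 1 ≤ e ∧ e ≤ (m : ℤ)) ∧ PrefixMin B s.2 e ∧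
      ({(i : ℝ)} : Set ℝ) ×ˢ Icc (j : ℝ) (e : ℝ) ⊆ freeSpace R B n m δ := by
    intro e; rw [hS, Finset.mem_filter, Finset.mem_Icc]
  have hdm : d ≤ (m : ℤ) := by
    have h7 := hfree (mem_prod_mkV (Int.cast_le.mpr hjd.le) (le_refl _))
    have h8 : (d : ℝ) ≤ (m : ℝ) := h7.2.1.2
    exact_mod_cast h8
  have hdS : d ∈ S := (hSmem d).mpr ⟨⟨by omega, hdm⟩, hpmd, hfree⟩
  set jstar := S.min' ⟨d, hdS⟩ with hjstar
  obtain ⟨⟨hjs1, hjs2⟩, hpmstar, hfreestar⟩ := (hSmem jstar).mp (S.min'_mem ⟨d, hdS⟩)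
  have hjstj : j < jstar := by omega
  set w : ℝ × ℝ := ((i : ℝ), (jstar : ℝ)) with hw
  have hrectex : (snocPath π w).IsRectilinear := by
    refine snocPath_rect hrect (Or.inl ⟨?_, ?_⟩)
    · rw [hlast]
    · rw [hlast]; exact Int.cast_lt.mpr hjstj
  have himex : (snocPath π w).image
      = π.image ∪ ({(i : ℝ)} : Set ℝ) ×ˢ Icc (j : ℝ) (jstar : ℝ) := by
    rw [snocPath_image, hlast, hw, seg_vert (Int.cast_le.mpr hjstj.le)]
  have hHG : IsHorizGreedy R B n m δ s (snocPath π w) := by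
    refine ⟨⟨hrectex, by rw [snocPath_vert_zero]; exact hv0, ?_, ?_⟩, ?_⟩
    · rw [himex]; exact union_subset himfree hfreestar
    · intro k
      induction k using Fin.lastCases with
      | last => exact ⟨i, jstar, snocPath_last π w, hpmi, hpmstar⟩
      | cast l => rw [snocPath_vert_castSucc]; exact hverts l
    · intro i1 j1 hpt hpmi1 hpmj1 ih hlt hpmih hfri
      rw [himex] at hpt
      rcases hpt with hold | hnew
      · rcases hgreedy i1 j1 hold hpmi1 hpmj1 ih hlt hpmih hfri with hseg | hl
        · left; rw [himex]; exact hseg.trans subset_union_left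
        · rw [hlast, Prod.mk.injEq] at hl
          have hi1 : i1 = i := by exact_mod_cast hl.1.symm
          have hj1 : j1 = j := by exact_mod_cast hl.2.symm
          rw [hi1, hj1] at hfri
          rw [hi1] at hlt
          exact absurd hfri (hnoh ih hlt hpmih)
      · rcases mem_prod_charV.mp hnew with ⟨hn1, hn2, hn3⟩
        have hn1' : (i1 : ℝ) = (i : ℝ) := hn1
        have hn2' : (j : ℝ) ≤ (j1 : ℝ) := hn2
        have hn3' : (j1 : ℝ) ≤ (jstar : ℝ) := hn3
        have hi1 : i1 = i := by exact_mod_cast hn1'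
        have hjj1 : j ≤ j1 := by exact_mod_cast hn2'
        have hj1star : j1 ≤ jstar := by exact_mod_cast hn3'
        rcases eq_or_lt_of_le hjj1 with heq | hlt2
        · rw [hi1] at hlt
          rw [hi1, ← heq] at hfri
          exact absurd hfri (hnoh ih hlt hpmih)
        · -- j < j1 : the column up to j1 is free, so j1 ∈ S, hence j1 = jstar
          have hcol : ({(i : ℝ)} : Set ℝ) ×ˢ Icc (j : ℝ) (j1 : ℝ) ⊆ freeSpace R B n m δ := by
            intro z hz
            rcases mem_prod_charV.mp hz with ⟨hz1, hz2, hz3⟩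
            exact hfreestar (mem_prod_charV.mpr ⟨hz1, hz2, hz3.trans hn3'⟩)
          have hj1S : j1 ∈ S := (hSmem j1).mpr ⟨⟨by omega, by omega⟩, hpmj1, hcol⟩
          have : jstar ≤ j1 := S.min'_le j1 hj1S
          have hj1eq : j1 = jstar := le_antisymm hj1star this
          right
          rw [snocPath_last, hw, hi1, hj1eq]
  have heq := hmaxi (snocPath π w) hHG (by rw [himex]; exact subset_union_left)
  have hwmem : w ∈ (snocPath π w).image := by
    rw [himex]
    exact Or.inr (mem_prod_mkV (Int.cast_le.mpr hjstj.le) (le_refl _))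
  rw [heq] at hwmem
  have hle := (le_last hrect hwmem).2
  rw [hlast] at hle
  have hle2 : (jstar : ℝ) ≤ (j : ℝ) := hle
  have : jstar ≤ j := by exact_mod_cast hle2
  omega

end GPMaux

namespace GPMaux

lemma cross {R B : ℝ → ℝ} {n m : ℕ} {δ : ℝ} {s s' : ℤ × ℤ} {π π' : RectPath}
    (hpoly : IsPoly1D B m)
    (hsepB : ∀ y ∈ Icc (1:ℝ) (m : ℝ), 0 ≤ B y)
    (hHG : IsHorizGreedy R B n m δ s π)
    (hHG' : IsHorizGreedy R B n m δ s' π')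
    {p : ℝ × ℝ}
    {k : Fin π.N} (hpk : p ∈ segment ℝ (π.vert k.castSucc) (π.vert k.succ))
    (hkh : (π.vert k.castSucc).2 = (π.vert k.succ).2 ∧ (π.vert k.castSucc).1 < (π.vert k.succ).1)
    (hpne : p ≠ π.vert k.succ)
    {k' : Fin π'.N} (hpk' : p ∈ segment ℝ (π'.vert k'.castSucc) (π'.vert k'.succ))
    (hkv : (π'.vert k'.castSucc).1 = (π'.vert k'.succ).1 ∧
      (π'.vert k'.castSucc).2 < (π'.vert k'.succ).2)
    (hpne' : p ≠ π'.vert k'.succ) : False := by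
  obtain ⟨⟨hrect, hv0, himfree, hverts⟩, hgreedy⟩ := hHG
  obtain ⟨⟨hrect', hv0', himfree', hverts'⟩, hgreedy'⟩ := hHG'
  obtain ⟨a, ja, hva, hpma, hpmja⟩ := hverts k.castSucc
  obtain ⟨b1, jb, hvb, hpmb, hpmjb⟩ := hverts k.succ
  obtain ⟨ic, c', hvc, hpmic, hpmc⟩ := hverts' k'.castSucc
  obtain ⟨idd, d', hvd, hpmid, hpmd⟩ := hverts' k'.succ
  -- the two edges as products
  have hjab : (ja : ℝ) = (jb : ℝ)  := by
    have := hkh.1; rw [hva, hvb] at this; exact this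
  have hicid : (ic : ℝ) = (idd : ℝ) := by
    have := hkv.1; rw [hvc, hvd] at this; exact this
  have hab1 : (a : ℝ) < (b1 : ℝ) := by
    have := hkh.2; rw [hva, hvb] at this; exact this
  have hcd : (c' : ℝ) < (d' : ℝ) := by
    have := hkv.2; rw [hvc, hvd] at this; exact this
  have hek : segment ℝ (π.vert k.castSucc) (π.vert k.succ)
      = Icc (a : ℝ) (b1 : ℝ) ×ˢ ({(ja : ℝ)} : Set ℝ) := by
    rw [edge_horiz_char hkh.1 hkh.2.le, hva, hvb]
  have hek' : segment ℝ (π'.vert k'.castSucc) (π'.vert k'.succ)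
      = ({(ic : ℝ)} : Set ℝ) ×ˢ Icc (c' : ℝ) (d' : ℝ) := by
    rw [edge_vert_char hkv.1 hkv.2.le, hvc, hvd]
  rw [hek] at hpk
  rw [hek'] at hpk'
  rcases mem_prod_char.mp hpk with ⟨⟨hp1, hp2⟩, hp3⟩
  rcases mem_prod_charV.mp hpk' with ⟨hp4, hp5, hp6⟩
  -- p is strictly inside both edges (before their endpoints)
  have hp2' : p.1 < (b1 : ℝ) := by
    rcases lt_or_eq_of_le hp2 with h | h
    · exact h
    · exfalso; apply hpne; rw [hvb, ← hjab]; exact Prod.ext h hp3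
  have hp6' : p.2 < (d' : ℝ) := by
    rcases lt_or_eq_of_le hp6 with h | h
    · exact h
    · exfalso; apply hpne'; rw [hvd, ← hicid]; exact Prod.ext hp4 h
  -- integer versions
  have haic : a ≤ ic := by exact_mod_cast hp4 ▸ hp1
  have hicb : ic < b1 := by exact_mod_cast hp4 ▸ hp2'
  have hcja : c' ≤ ja := by exact_mod_cast hp3 ▸ hp5
  have hjad : ja < d' := by exact_mod_cast hp3 ▸ hp6'
  -- start bounds
  have hpim : p ∈ π.image := (mem_image_iff π).mpr (Or.inr ⟨k, by rw [hek]; exact hpk⟩)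
  have hpim' : p ∈ π'.image := (mem_image_iff π').mpr (Or.inr ⟨k', by rw [hek']; exact hpk'⟩)
  have hsle : (s.1 : ℝ) ≤ p.1 := by
    have := start_le hrect hpim; rw [hv0] at this; exact this.1
  have hs1ic : s.1 ≤ ic := by exact_mod_cast hp4 ▸ hsle
  -- b1 is a prefix minimum for s'.1
  have hpmb' : PrefixMin R s'.1 b1 :=
    PrefixMin.trans' hpmic hpmb hs1ic hicb.le
  -- bounds for the minimizer
  have hvcim : ((ic : ℝ), (c' : ℝ)) ∈ freeSpace R B n m δ := by
    apply himfree'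
    rw [← hvc]; exact vert_mem_image π' k'.castSucc
  have hpfree : p ∈ freeSpace R B n m δ := himfree hpim
  have h1c : 1 ≤ c' := by
    have h0 : (1 : ℝ) ≤ (c' : ℝ) := hvcim.2.1.1
    exact_mod_cast h0
  have hjam : (ja : ℝ) ≤ (m : ℝ) := hp3 ▸ hpfree.2.1.2
  -- the minimizer e of B on [c', ja]
  obtain ⟨e, hce, heja, hemin⟩ := poly_min hpoly ((ja - c').toNat) c' ja h1c hcja hjam rfl
  have hcer : (c' : ℝ) ≤ (e : ℝ) := by exact_mod_cast hce
  have hejar : (e : ℝ) ≤ (ja : ℝ) := by exact_mod_cast heja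
  have h1cr : (1 : ℝ) ≤ (c' : ℝ) := by exact_mod_cast h1c
  have hBround : ∀ x : ℝ, x ∈ Icc (c' : ℝ) (ja : ℝ) → 0 ≤ B x := by
    intro x hx
    exact hsepB x ⟨by linarith [hx.1], by linarith [hx.2]⟩
  have hem : (e : ℝ) ∈ Icc (c' : ℝ) (ja : ℝ) := ⟨hcer, hejar⟩
  have hjadr : (ja : ℝ) < (d' : ℝ) := by exact_mod_cast hjad
  -- e is a prefix minimum for s'.2
  have hpme : PrefixMin B s'.2 e := by
    refine PrefixMin.trans' hpmc ⟨hce, fun x hx => ?_⟩ (le_refl _) hce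
    have hxm : x ∈ Icc (c' : ℝ) (ja : ℝ) := ⟨hx.1, le_trans hx.2 hejar⟩
    rw [abs_of_nonneg (hBround _ hem), abs_of_nonneg (hBround x hxm)]
    exact hemin x hxm
  -- the row at height e is free on [ic, b1]
  have hrowfree : Icc (ic : ℝ) (b1 : ℝ) ×ˢ ({(e : ℝ)} : Set ℝ) ⊆ freeSpace R B n m δ := by
    intro z hz
    rcases mem_prod_char.mp hz with ⟨⟨hz1, hz2⟩, hz3⟩
    have hzrow : ((z.1, (ja : ℝ)) : ℝ × ℝ) ∈ freeSpace R B n m δ := by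
      apply himfree
      refine (mem_image_iff π).mpr (Or.inr ⟨k, ?_⟩)
      rw [hek]
      exact mem_prod_mk (le_trans (Int.cast_le.mpr haic) hz1) hz2
    have hBe : B (e : ℝ) ≤ B (ja : ℝ) := hemin _ ⟨Int.cast_le.mpr hcja, le_refl _⟩
    have hfs1 : z.1 ∈ Icc (1 : ℝ) (n : ℝ) := hzrow.1
    have hfs3 : B (ja : ℝ) - R z.1 ≤ δ := hzrow.2.2
    refine ⟨hfs1, ?_, ?_⟩
    · rw [hz3]; exact ⟨by linarith, by linarith⟩
    · rw [hz3]; linarith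
  -- the point (ic, e) lies on π'
  have hmem2 : ((ic : ℝ), (e : ℝ)) ∈ π'.image := by
    refine (mem_image_iff π').mpr (Or.inr ⟨k', ?_⟩)
    rw [hek']
    exact mem_prod_mkV hcer (by linarith)
  -- apply greediness of π' at (ic, e) with target b1
  rcases hgreedy' ic e hmem2 hpmic hpme b1 hicb hpmb' hrowfree with hseg | hl
  · -- (b1, e) ∈ π'.image, incomparable with (idd, d') ∈ π'.image
    have hb1e : ((b1 : ℝ), (e : ℝ)) ∈ π'.image :=
      hseg (mem_prod_mk (Int.cast_le.mpr hicb.le) (le_refl _))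
    have hd'im : ((idd : ℝ), (d' : ℝ)) ∈ π'.image := by
      rw [← hvd]; exact vert_mem_image π' k'.succ
    rcases comparable hrect' hb1e hd'im with h | h
    · have : (b1 : ℝ) ≤ (idd : ℝ) := h.1
      rw [← hicid] at this
      have : b1 ≤ ic := by exact_mod_cast this
      omega
    · have : (d' : ℝ) ≤ (e : ℝ) := h.2
      have : d' ≤ e := by exact_mod_cast this
      omega
  · -- π'.last = (ic, e), but (idd, d') is on π' with d' > e
    have hd'im : ((idd : ℝ), (d' : ℝ)) ∈ π'.image := by
      rw [← hvd]; exact vert_mem_image π' k'.succ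
    have := (le_last hrect' hd'im).2
    rw [hl] at this
    have h2 : (d' : ℝ) ≤ (e : ℝ) := this
    have : d' ≤ e := by exact_mod_cast h2
    omega

end GPMaux

namespace GPMaux

lemma stop_mismatch {R B : ℝ → ℝ} {n m : ℕ} {δ : ℝ} {s s' : ℤ × ℤ} {π π' : RectPath}
    (hmax : IsMaximalHG R B n m δ s π)
    (hHG' : IsHorizGreedy R B n m δ s' π')
    {p : ℝ × ℝ} (hplast : p = π.last) (hpim' : p ∈ π'.image) (hpne : p ≠ π'.last) : False := by
  classical
  obtain ⟨⟨hrect', hv0', himfree', hverts'⟩, hgreedy'⟩ := hHG'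
  have hrect : π.IsRectilinear := hmax.1.1.1
  have hverts := hmax.1.1.2.2.2
  obtain ⟨i, j, hv, hpmi, hpmj⟩ := hverts (Fin.last π.N)
  have hlast : π.last = ((i : ℝ), (j : ℝ)) := hv
  have hp1 : p.1 = (i : ℝ) := by rw [hplast, hlast]
  have hp2 : p.2 = (j : ℝ) := by rw [hplast, hlast]
  obtain ⟨k', hpk', hpne'⟩ := exists_next hrect' hpim' (by rw [hplast, hlast] at hpne ⊢; exact hpne)
  obtain ⟨a1, c1, hva', hpma1, hpmc1⟩ := hverts' k'.castSucc
  obtain ⟨a2, c2, hvb', hpma2, hpmc2⟩ := hverts' k'.succ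
  have hstart' := start_le hrect' hpim'
  rw [hv0'] at hstart'
  have hs'1 : (s'.1 : ℝ) ≤ (i : ℝ) := hp1 ▸ hstart'.1
  have hs'2 : (s'.2 : ℝ) ≤ (j : ℝ) := hp2 ▸ hstart'.2
  have hs'1i : s'.1 ≤ i := by exact_mod_cast hs'1
  have hs'2j : s'.2 ≤ j := by exact_mod_cast hs'2
  have hedgesub : segment ℝ (π'.vert k'.castSucc) (π'.vert k'.succ) ⊆ freeSpace R B n m δ :=
    fun z hz => himfree' ((mem_image_iff π').mpr (Or.inr ⟨k', hz⟩))
  rcases hrect' k' with ⟨h1, h2⟩ | ⟨h1, h2⟩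
  · -- π' moves vertically from p
    have hekv : segment ℝ (π'.vert k'.castSucc) (π'.vert k'.succ)
        = ({(a1 : ℝ)} : Set ℝ) ×ˢ Icc (c1 : ℝ) (c2 : ℝ) := by
      rw [edge_vert_char h1 h2.le, hva', hvb']
    have ha12 : (a1 : ℝ) = (a2 : ℝ) := by
      have := h1; rw [hva', hvb'] at this; exact this
    rw [hekv] at hpk'
    rcases mem_prod_charV.mp hpk' with ⟨hq1, hq2, hq3⟩
    have hia1 : (i : ℝ) = (a1 : ℝ) := by rw [← hp1, hq1]
    have hq3' : p.2 < (c2 : ℝ) := by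
      rcases lt_or_eq_of_le hq3 with h | h
      · exact h
      · exfalso; apply hpne'; rw [hvb', ← ha12, ← hia1]
        exact Prod.ext (by rw [hp1]) (by rw [h])
    have hjc2 : j < c2 := by exact_mod_cast hp2 ▸ hq3'
    have hjc1 : (c1 : ℝ) ≤ (j : ℝ) := hp2 ▸ hq2
    have hpmd : PrefixMin B s.2 c2 := PrefixMin.trans' hpmj hpmc2 hs'2j hjc2.le
    have hcolfree : ({(i : ℝ)} : Set ℝ) ×ˢ Icc (j : ℝ) (c2 : ℝ) ⊆ freeSpace R B n m δ := by
      intro z hz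
      rcases mem_prod_charV.mp hz with ⟨hz1, hz2, hz3⟩
      apply hedgesub
      rw [hekv]
      exact mem_prod_charV.mpr ⟨by rw [hz1, hia1], by linarith, hz3⟩
    by_cases hex : ∃ ih : ℤ, i < ih ∧ PrefixMin R s.1 ih ∧
        Icc (i : ℝ) (ih : ℝ) ×ˢ ({(j : ℝ)} : Set ℝ) ⊆ freeSpace R B n m δ
    · obtain ⟨ih, h3, h4, h5⟩ := hex
      exact stop_horiz hmax hlast h3 h4 h5
    · push_neg at hex
      exact stop_vert hmax hlast hex hjc2 hpmd hcolfree
  · -- π' moves horizontally from p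
    have hekh : segment ℝ (π'.vert k'.castSucc) (π'.vert k'.succ)
        = Icc (a1 : ℝ) (a2 : ℝ) ×ˢ ({(c1 : ℝ)} : Set ℝ) := by
      rw [edge_horiz_char h1 h2.le, hva', hvb']
    have hc12 : (c1 : ℝ) = (c2 : ℝ) := by
      have := h1; rw [hva', hvb'] at this; exact this
    rw [hekh] at hpk'
    rcases mem_prod_char.mp hpk' with ⟨⟨hq1, hq2⟩, hq3⟩
    have hjc1 : (j : ℝ) = (c1 : ℝ) := by rw [← hp2, hq3]
    have hq2' : p.1 < (a2 : ℝ) := by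
      rcases lt_or_eq_of_le hq2 with h | h
      · exact h
      · exfalso; apply hpne'; rw [hvb', ← hc12, ← hjc1]
        exact Prod.ext (by rw [h]) (by rw [hp2])
    have hia2 : i < a2 := by exact_mod_cast hp1 ▸ hq2'
    have hpmb : PrefixMin R s.1 a2 := PrefixMin.trans' hpmi hpma2 hs'1i hia2.le
    have hrowfree : Icc (i : ℝ) (a2 : ℝ) ×ˢ ({(j : ℝ)} : Set ℝ) ⊆ freeSpace R B n m δ := by
      intro z hz
      rcases mem_prod_char.mp hz with ⟨⟨hz1, hz2⟩, hz3⟩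
      apply hedgesub
      rw [hekh]
      refine mem_prod_char.mpr ⟨⟨?_, hz2⟩, by rw [hz3, hjc1]⟩
      · have : (a1 : ℝ) ≤ p.1 := hq1
        rw [hp1] at this
        linarith
    exact stop_horiz hmax hlast hia2 hpmb hrowfree

end GPMaux

open GPMaux

/-- If two maximal horizontal-greedy `δ`-matchings `π` and `π'`
(starting at `s` and `s'`) share a point `p`, then they are identical from `p`
onwards: their images agree inside `[p₁, n] × [p₂, m]`. -/
theorem greedy_paths_merge
    (n m : ℕ) (hn : 1 ≤ n) (hm : 1 ≤ m)
    (R B : ℝ → ℝ) (hR : IsPoly1D R n) (hB : IsPoly1D B m)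
    (hsepR : ∀ x ∈ Icc (1:ℝ) (n : ℝ), R x ≤ 0)
    (hsepB : ∀ y ∈ Icc (1:ℝ) (m : ℝ), 0 ≤ B y)
    (hgpR : GeneralPosition R n) (hgpB : GeneralPosition B m)
    (δ : ℝ) (hδ : 0 ≤ δ)
    (s s' : ℤ × ℤ)
    (hs : ((s.1 : ℝ), (s.2 : ℝ)) ∈ freeSpace R B n m δ)
    (hs' : ((s'.1 : ℝ), (s'.2 : ℝ)) ∈ freeSpace R B n m δ)
    (π π' : RectPath)
    (hπ : IsMaximalHG R B n m δ s π) (hπ' : IsMaximalHG R B n m δ s' π')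
    (p : ℝ × ℝ) (hp : p ∈ π.image ∩ π'.image) :
    π.image ∩ (Icc p.1 (n : ℝ) ×ˢ Icc p.2 (m : ℝ)) =
      π'.image ∩ (Icc p.1 (n : ℝ) ×ˢ Icc p.2 (m : ℝ)) := by
  have hrect : π.IsRectilinear := hπ.1.1.1
  have hrect' : π'.IsRectilinear := hπ'.1.1.1
  have himfree : π.image ⊆ freeSpace R B n m δ := hπ.1.1.2.2.1
  have himfree' : π'.image ⊆ freeSpace R B n m δ := hπ'.1.1.2.2.1
  -- the main induction
  have main : ∀ K : ℕ, ∀ q : ℝ × ℝ, q ∈ π.image → q ∈ π'.image →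
      pmeasure π q + pmeasure π' q ≤ K → Suffix π q = Suffix π' q := by
    intro K
    induction K with
    | zero =>
      intro q hq hq' hK
      by_cases hql : q = π.last
      · by_cases hql' : q = π'.last
        · rw [suffix_last hrect hql, suffix_last hrect' hql']
        · exact (stop_mismatch hπ hπ'.1 hql hq' hql').elim
      · exfalso
        obtain ⟨k, hqk, hqkne⟩ := exists_next hrect hq hql
        have h1 : ¬ π.vert k.succ ≤ q :=
          fun hle => hqkne (le_antisymm (mem_edge_between hrect hqk).2 hle)
        have : 0 < pmeasure π q := by
          rw [pmeasure]
          exact Finset.card_pos.mpr ⟨k, Finset.mem_filter.mpr ⟨Finset.mem_univ _, h1⟩⟩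
        omega
    | succ K ih =>
      intro q hq hq' hK
      by_cases hql : q = π.last
      · by_cases hql' : q = π'.last
        · rw [suffix_last hrect hql, suffix_last hrect' hql']
        · exact (stop_mismatch hπ hπ'.1 hql hq' hql').elim
      · by_cases hql' : q = π'.last
        · exact (stop_mismatch hπ' hπ.1 hql' hq hql).elim
        · obtain ⟨k, hqk, hqkne⟩ := exists_next hrect hq hql
          obtain ⟨k', hqk', hqkne'⟩ := exists_next hrect' hq' hql'
          have hqlew : q ≤ π.vert k.succ := (mem_edge_between hrect hqk).2
          have hqlew' : q ≤ π'.vert k'.succ := (mem_edge_between hrect' hqk').2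
          have h1 : ¬ π.vert k.succ ≤ q := fun hle => hqkne (le_antisymm hqlew hle)
          have h1' : ¬ π'.vert k'.succ ≤ q := fun hle => hqkne' (le_antisymm hqlew' hle)
          rcases hrect k with hv | hh
          · rcases hrect' k' with hv' | hh'
            · -- both vertical
              have hchar : segment ℝ (π.vert k.castSucc) (π.vert k.succ)
                  = ({(π.vert k.castSucc).1} : Set ℝ) ×ˢ
                    Icc (π.vert k.castSucc).2 (π.vert k.succ).2 := edge_vert_char hv.1 hv.2.le
              have hchar' : segment ℝ (π'.vert k'.castSucc) (π'.vert k'.succ)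
                  = ({(π'.vert k'.castSucc).1} : Set ℝ) ×ˢ
                    Icc (π'.vert k'.castSucc).2 (π'.vert k'.succ).2 := edge_vert_char hv'.1 hv'.2.le
              obtain ⟨hm1, hm2, hm3⟩ := mem_prod_charV.mp (hchar ▸ hqk)
              obtain ⟨hm1', hm2', hm3'⟩ := mem_prod_charV.mp (hchar' ▸ hqk')
              set t := min (π.vert k.succ).2 (π'.vert k'.succ).2 with hts
              set qq : ℝ × ℝ := (q.1, t) with hqq
              have hq2t : q.2 ≤ t := le_min hm3 hm3'
              have hqqk : qq ∈ segment ℝ (π.vert k.castSucc) (π.vert k.succ) := by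
                rw [hchar]
                exact mem_prod_charV.mpr ⟨hm1, hm2.trans hq2t, min_le_left _ _⟩
              have hqqk' : qq ∈ segment ℝ (π'.vert k'.castSucc) (π'.vert k'.succ) := by
                rw [hchar']
                exact mem_prod_charV.mpr ⟨hm1', hm2'.trans hq2t, min_le_right _ _⟩
              have hqleqq : q ≤ qq := ⟨le_refl _, hq2t⟩
              have hqqim : qq ∈ π.image := (mem_image_iff π).mpr (Or.inr ⟨k, hqqk⟩)
              have hqqim' : qq ∈ π'.image := (mem_image_iff π').mpr (Or.inr ⟨k', hqqk'⟩)
              have hsum : pmeasure π qq + pmeasure π' qq ≤ K := by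
                rcases le_total (π.vert k.succ).2 (π'.vert k'.succ).2 with hmm | hmm
                · have hqqw : qq = π.vert k.succ := by
                    apply Prod.ext
                    · rw [hqq]; show q.1 = _; rw [hm1, hv.1]
                    · rw [hqq]; show t = _; rw [hts]; exact min_eq_left hmm
                  have hlt := pmeasure_lt π hqleqq h1 (le_of_eq hqqw.symm)
                  have hle := pmeasure_mono π' hqleqq
                  omega
                · have hqqw : qq = π'.vert k'.succ := by
                    apply Prod.ext
                    · rw [hqq]; show q.1 = _; rw [hm1', hv'.1]
                    · rw [hqq]; show t = _; rw [hts]; exact min_eq_right hmm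
                  have hlt := pmeasure_lt π' hqleqq h1' (le_of_eq hqqw.symm)
                  have hle := pmeasure_mono π hqleqq
                  omega
              rw [suffix_split hrect hqk hqqk hqleqq, suffix_split hrect' hqk' hqqk' hqleqq,
                ih qq hqqim hqqim' hsum]
            · exact (cross hB hsepB hπ'.1 hπ.1 hqk' hh' hqkne' hqk hv hqkne).elim
          · rcases hrect' k' with hv' | hh'
            · exact (cross hB hsepB hπ.1 hπ'.1 hqk hh hqkne hqk' hv' hqkne').elim
            · -- both horizontal
              have hchar : segment ℝ (π.vert k.castSucc) (π.vert k.succ)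
                  = Icc (π.vert k.castSucc).1 (π.vert k.succ).1 ×ˢ
                    ({(π.vert k.castSucc).2} : Set ℝ) := edge_horiz_char hh.1 hh.2.le
              have hchar' : segment ℝ (π'.vert k'.castSucc) (π'.vert k'.succ)
                  = Icc (π'.vert k'.castSucc).1 (π'.vert k'.succ).1 ×ˢ
                    ({(π'.vert k'.castSucc).2} : Set ℝ) := edge_horiz_char hh'.1 hh'.2.le
              obtain ⟨⟨hm2, hm3⟩, hm1⟩ := mem_prod_char.mp (hchar ▸ hqk)
              obtain ⟨⟨hm2', hm3'⟩, hm1'⟩ := mem_prod_char.mp (hchar' ▸ hqk')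
              set t := min (π.vert k.succ).1 (π'.vert k'.succ).1 with hts
              set qq : ℝ × ℝ := (t, q.2) with hqq
              have hq1t : q.1 ≤ t := le_min hm3 hm3'
              have hqqk : qq ∈ segment ℝ (π.vert k.castSucc) (π.vert k.succ) := by
                rw [hchar]
                exact mem_prod_char.mpr ⟨⟨hm2.trans hq1t, min_le_left _ _⟩, hm1⟩
              have hqqk' : qq ∈ segment ℝ (π'.vert k'.castSucc) (π'.vert k'.succ) := by
                rw [hchar']
                exact mem_prod_char.mpr ⟨⟨hm2'.trans hq1t, min_le_right _ _⟩, hm1'⟩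
              have hqleqq : q ≤ qq := ⟨hq1t, le_refl _⟩
              have hqqim : qq ∈ π.image := (mem_image_iff π).mpr (Or.inr ⟨k, hqqk⟩)
              have hqqim' : qq ∈ π'.image := (mem_image_iff π').mpr (Or.inr ⟨k', hqqk'⟩)
              have hsum : pmeasure π qq + pmeasure π' qq ≤ K := by
                rcases le_total (π.vert k.succ).1 (π'.vert k'.succ).1 with hmm | hmm
                · have hqqw : qq = π.vert k.succ := by
                    apply Prod.ext
                    · rw [hqq]; show t = _; rw [hts]; exact min_eq_left hmm
                    · rw [hqq]; show q.2 = _; rw [hm1, hh.1]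
                  have hlt := pmeasure_lt π hqleqq h1 (le_of_eq hqqw.symm)
                  have hle := pmeasure_mono π' hqleqq
                  omega
                · have hqqw : qq = π'.vert k'.succ := by
                    apply Prod.ext
                    · rw [hqq]; show t = _; rw [hts]; exact min_eq_right hmm
                    · rw [hqq]; show q.2 = _; rw [hm1', hh'.1]
                  have hlt := pmeasure_lt π' hqleqq h1' (le_of_eq hqqw.symm)
                  have hle := pmeasure_mono π hqleqq
                  omega
              rw [suffix_split hrect hqk hqqk hqleqq, suffix_split hrect' hqk' hqqk' hqleqq,
                ih qq hqqim hqqim' hsum]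
  -- reduce the goal to suffixes
  have hbox : ∀ σ : RectPath, σ.image ⊆ freeSpace R B n m δ →
      σ.image ∩ (Icc p.1 (n : ℝ) ×ˢ Icc p.2 (m : ℝ)) = Suffix σ p := by
    intro σ hsub
    ext z
    constructor
    · rintro ⟨hz, hzb⟩
      exact ⟨hz, ⟨hzb.1.1, hzb.2.1⟩⟩
    · rintro ⟨hz, hpz⟩
      exact ⟨hz, ⟨hpz.1, (hsub hz).1.2⟩, ⟨hpz.2, (hsub hz).2.1.2⟩⟩
  rw [hbox π himfree, hbox π' himfree']
  exact main (pmeasure π p + pmeasure π' p) p hp.1 hp.2 (le_refl _)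
end
end
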